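/- arXiv:2106.03080 — 9 statements merged into one kernel-verified Lean document; each statement's English description precedes it below -/
import Mathlib

section
/- Let G be a finite simple connected graph, let W be a subset of V(G) with at least two elements, let a ∈ W and b ∈ V(G) \ W. If the pair a, b is not doubly resolved by any pair of vertices of W, then for every w ∈ W one has d(b,w) = d(b,a) + d(a,w); in particular, for each w ∈ W there exists a shortest path between b and w that contains a. -/
open SimpleGraph

/-- Vertices `u, v` are doubly resolved by vertices `x, y` if
`d(u,x) − d(v,x) ≠ d(u,y) − d(v,y)`. -/
def doublyResolves {V : Type*} (G : SimpleGraph V) (x y u v : V) : Prop :=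
  (G.dist u x : ℤ) - (G.dist v x : ℤ) ≠ (G.dist u y : ℤ) - (G.dist v y : ℤ)

/-- A set `W` of vertices is a doubly resolving set for `G` if every two distinct
vertices of `G` are doubly resolved by some two vertices of `W`. -/
def IsDoublyResolvingSet {V : Type*} (G : SimpleGraph V) (W : Set V) : Prop :=
  ∀ u v : V, u ≠ v → ∃ x ∈ W, ∃ y ∈ W, doublyResolves G x y u v

/-- The doubly resolving number `ψ(G)`: the minimum cardinality of a doubly
resolving set for `G`. -/
noncomputable def psi {V : Type*} (G : SimpleGraph V) : ℕ :=
  sInf {k | ∃ W : Finset V, W.card = k ∧ IsDoublyResolvingSet G ↑W}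

/-- If `a ∈ W`, `b ∉ W`, `|W| ≥ 2`, and `a, b` are not doubly resolved by any pair of
vertices of `W`, then for every `w ∈ W`, `d(b,w) = d(b,a) + d(a,w)`; in particular there
is a shortest path from `b` to `w` containing `a`. -/
theorem stmt_0 {V : Type*} [Fintype V] (G : SimpleGraph V) (hG : G.Connected)
    (W : Set V) (hW : 2 ≤ W.ncard) (a b : V) (ha : a ∈ W) (hb : b ∉ W)
    (h : ∀ x ∈ W, ∀ y ∈ W, ¬ doublyResolves G x y a b) :
    ∀ w ∈ W, G.dist b w = G.dist b a + G.dist a w ∧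
      ∃ p : G.Walk b w, p.length = G.dist b w ∧ a ∈ p.support := by
  intro w hw
  have key := h a ha w hw
  unfold doublyResolves at key
  push_neg at key
  simp only [SimpleGraph.dist_self] at key
  have hc : G.dist a b = G.dist b a := SimpleGraph.dist_comm ..
  have hc2 : G.dist a w = G.dist w a := SimpleGraph.dist_comm ..
  have hdist : G.dist b w = G.dist b a + G.dist a w := by omega
  refine ⟨hdist, ?_⟩
  obtain ⟨p, hp⟩ := hG.exists_walk_length_eq_dist b a
  obtain ⟨q, hq⟩ := hG.exists_walk_length_eq_dist a w
  refine ⟨p.append q, ?_, ?_⟩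
  · rw [SimpleGraph.Walk.length_append, hp, hq, hdist]
  · simp [SimpleGraph.Walk.mem_support_append_iff]
end

section
/- Let G be a finite simple connected graph, let u, v be twin vertices of G, and let W be a doubly resolving set for G with u ∈ W and v ∉ W. Then (W \ {u}) ∪ {v} is also a doubly resolving set for G. -/
open SimpleGraph

private lemma twin_dist_le {V : Type*} (G : SimpleGraph V) (hG : G.Connected)
    (u v : V)
    (htwin : G.neighborSet u \ {v} = G.neighborSet v \ {u})
    (a : V) (hau : a ≠ u) (hav : a ≠ v) :
    G.dist a u ≤ G.dist a v := by
  obtain ⟨p, hp⟩ := hG.exists_walk_length_eq_dist a v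
  cases hq : p.reverse with
  | nil =>
      have h0 : p.length = 0 := by
        have := congrArg SimpleGraph.Walk.length hq
        simpa using this
      exact absurd (SimpleGraph.Walk.eq_of_length_eq_zero h0) hav
  | cons h q =>
      rename_i w
      have hlen : q.length + 1 = G.dist a v := by
        have := congrArg SimpleGraph.Walk.length hq
        simpa [hp] using this.symm
      by_cases hwu : w = u
      · have : G.dist a u ≤ q.length := by
          rw [← hwu]
          simpa [SimpleGraph.dist_comm] using SimpleGraph.dist_le q
        omega
      · have hadj : G.Adj w u := by
          have hw : w ∈ G.neighborSet v \ {u} := ⟨h, hwu⟩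
          rw [← htwin] at hw
          exact hw.1.symm
        have : G.dist a u ≤ (q.reverse.concat hadj).length :=
          SimpleGraph.dist_le _
        simp [SimpleGraph.Walk.length_concat] at this
        omega

private lemma twin_dist {V : Type*} (G : SimpleGraph V) (hG : G.Connected)
    (u v : V)
    (htwin : G.neighborSet u \ {v} = G.neighborSet v \ {u})
    (a : V) (hau : a ≠ u) (hav : a ≠ v) :
    G.dist a u = G.dist a v :=
  le_antisymm (twin_dist_le G hG u v htwin a hau hav)
    (twin_dist_le G hG v u htwin.symm a hav hau)

/-- If `u, v` are twin vertices of a connected graph `G` and `W` is a doubly resolving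
set with `u ∈ W`, `v ∉ W`, then `(W \ {u}) ∪ {v}` is also a doubly resolving set. -/
theorem stmt_2 {V : Type*} [Fintype V] (G : SimpleGraph V) (hG : G.Connected)
    (u v : V) (huv : u ≠ v)
    (htwin : G.neighborSet u \ {v} = G.neighborSet v \ {u})
    (W : Set V) (hW : IsDoublyResolvingSet G W) (huW : u ∈ W) (hvW : v ∉ W) :
    IsDoublyResolvingSet G ((W \ {u}) ∪ {v}) := by
  classical
  intro p q hpq
  set σ : V → V := fun w => if w = u then v else w with hσ
  set star : V → V := fun a => if a = u then v else if a = v then u else a with hstar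
  have hstar_invol : ∀ a, star (star a) = a := by
    intro a
    by_cases h1 : a = u
    · simp [hstar, h1, huv, huv.symm]
    · by_cases h2 : a = v
      · simp [hstar, h1, h2, huv]
      · simp [hstar, h1, h2]
  have hstarinj : Function.Injective star := by
    intro a b h
    have := congrArg star h
    rwa [hstar_invol, hstar_invol] at this
  have hkey : ∀ (p : V), ∀ w ∈ W, G.dist p (σ w) = G.dist (star p) w := by
    intro p w hw
    have hwv : w ≠ v := fun h => hvW (h ▸ hw)
    by_cases hwu : w = u
    · have hσw : σ w = v := by simp [hσ, hwu]
      rw [hσw, hwu]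
      by_cases hpu : p = u
      · rw [hpu]
        simp only [hstar, if_pos rfl]
        exact SimpleGraph.dist_comm
      · by_cases hpv : p = v
        · rw [hpv]
          simp only [hstar, if_neg huv.symm, if_pos rfl]
          simp [SimpleGraph.dist_self]
        · simp only [hstar, if_neg hpu, if_neg hpv]
          exact (twin_dist G hG u v htwin p hpu hpv).symm
    · have comm3 : G.dist u w = G.dist v w :=
        calc G.dist u w = G.dist w u := SimpleGraph.dist_comm
          _ = G.dist w v := twin_dist G hG u v htwin w hwu hwv
          _ = G.dist v w := SimpleGraph.dist_comm
      have hσw : σ w = w := if_neg hwu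
      rw [hσw]
      by_cases hpu : p = u
      · rw [hpu]
        simp only [hstar, if_pos rfl]
        exact comm3
      · by_cases hpv : p = v
        · rw [hpv]
          simp only [hstar, if_neg huv.symm, if_pos rfl]
          exact comm3.symm
        · simp only [hstar, if_neg hpu, if_neg hpv]
  obtain ⟨x, hx, y, hy, hres⟩ := hW (star p) (star q) (fun h => hpq (hstarinj h))
  have hmem : ∀ w ∈ W, σ w ∈ (W \ {u}) ∪ {v} := by
    intro w hw
    by_cases hwu : w = u
    · right; simp [hσ, hwu]
    · left; exact ⟨by simpa [hσ, hwu] using hw, by simp [hσ, hwu]⟩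
  refine ⟨σ x, hmem x hx, σ y, hmem y hy, ?_⟩
  unfold doublyResolves at hres ⊢
  rw [hkey p x hx, hkey p y hy, hkey q x hx, hkey q y hy]
  exact hres
end

section
/- Let K_{r,s} be the complete bipartite graph with 1 ≤ r ≤ 2, r ≤ s, and total order n = r + s ≥ 3. Then ψ(K_{r,s}) = n − 1. -/
open SimpleGraph

namespace KBipAux

open Sum

variable {r s : ℕ}

lemma dist_lr (a : Fin r) (b : Fin s) :
    (completeBipartiteGraph (Fin r) (Fin s)).dist (inl a) (inr b) = 1 :=
  SimpleGraph.dist_eq_one_iff_adj.mpr (by simp)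

lemma dist_rl (a : Fin r) (b : Fin s) :
    (completeBipartiteGraph (Fin r) (Fin s)).dist (inr b) (inl a) = 1 :=
  SimpleGraph.dist_eq_one_iff_adj.mpr (by simp)

lemma dist_ll (b : Fin s) {a a' : Fin r} (h : a ≠ a') :
    (completeBipartiteGraph (Fin r) (Fin s)).dist (inl a) (inl a') = 2 := by
  set G := completeBipartiteGraph (Fin r) (Fin s)
  have hadj1 : G.Adj (inl a) (inr b) := by simp [G]
  have hadj2 : G.Adj ((inr b : Fin r ⊕ Fin s)) (inl a') := by simp [G]
  have h2 : G.dist (inl a) (inl a') ≤ 2 := by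
    simpa [SimpleGraph.Walk.length_cons] using
      SimpleGraph.dist_le (Walk.cons hadj1 (Walk.cons hadj2 Walk.nil))
  have h0 : 0 < G.dist (inl a) (inl a') :=
    SimpleGraph.Reachable.pos_dist_of_ne ⟨Walk.cons hadj1 (Walk.cons hadj2 Walk.nil)⟩
      (by simp [h])
  have h1 : G.dist (inl a) (inl a') ≠ 1 := by
    intro hc
    have := SimpleGraph.dist_eq_one_iff_adj.mp hc
    simp [G] at this
  omega

lemma dist_rr (a : Fin r) {b b' : Fin s} (h : b ≠ b') :
    (completeBipartiteGraph (Fin r) (Fin s)).dist (inr b) (inr b') = 2 := by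
  set G := completeBipartiteGraph (Fin r) (Fin s)
  have hadj1 : G.Adj (inr b) (inl a) := by simp [G]
  have hadj2 : G.Adj ((inl a : Fin r ⊕ Fin s)) (inr b') := by simp [G]
  have h2 : G.dist (inr b) (inr b') ≤ 2 := by
    simpa [SimpleGraph.Walk.length_cons] using
      SimpleGraph.dist_le (Walk.cons hadj1 (Walk.cons hadj2 Walk.nil))
  have h0 : 0 < G.dist (inr b) (inr b') :=
    SimpleGraph.Reachable.pos_dist_of_ne ⟨Walk.cons hadj1 (Walk.cons hadj2 Walk.nil)⟩
      (by simp [h])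
  have h1 : G.dist (inr b) (inr b') ≠ 1 := by
    intro hc
    have := SimpleGraph.dist_eq_one_iff_adj.mp hc
    simp [G] at this
  omega

end KBipAux

/-- For the complete bipartite graph `K_{r,s}` with `1 ≤ r ≤ 2`, `r ≤ s` and
`n = r + s ≥ 3`, the doubly resolving number is `n − 1`. -/
theorem stmt_3 (r s : ℕ) (hr1 : 1 ≤ r) (hr2 : r ≤ 2) (hrs : r ≤ s) (hn : 3 ≤ r + s) :
    psi (completeBipartiteGraph (Fin r) (Fin s)) = r + s - 1 := by
  classical
  open Sum KBipAux in
  have hr0 : 0 < r := hr1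
  have hs0 : 0 < s := by omega
  have hs2 : 2 ≤ s := by omega
  set G := completeBipartiteGraph (Fin r) (Fin s) with hG
  set b₀ : Fin s := ⟨0, hs0⟩ with hb₀
  -- Upper bound: W = everything except `inl 0`.
  have hmem : r + s - 1 ∈ {k | ∃ W : Finset (Fin r ⊕ Fin s),
      W.card = k ∧ IsDoublyResolvingSet G ↑W} := by
    refine ⟨({Sum.inl ⟨0, hr0⟩}ᶜ : Finset (Fin r ⊕ Fin s)), ?_, ?_⟩
    · simp [Finset.card_compl, Fintype.card_sum]
    · intro u v huv
      have hWmem : ∀ z : Fin r ⊕ Fin s,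
          z ∈ (({Sum.inl ⟨0, hr0⟩}ᶜ : Finset (Fin r ⊕ Fin s)) : Set (Fin r ⊕ Fin s)) ↔
            z ≠ Sum.inl ⟨0, hr0⟩ := by
        intro z; simp
      rcases u with a | b <;> rcases v with a' | b'
      · -- both left
        have ha : a ≠ a' := by simpa using huv
        by_cases h0 : a = ⟨0, hr0⟩
        · refine ⟨Sum.inl a', (hWmem _).mpr (by simp [← h0, Ne.symm ha]), Sum.inr b₀,
            (hWmem _).mpr (by simp), ?_⟩
          have d1 : G.dist (inl a) (inl a') = 2 := dist_ll b₀ ha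
          have d2 : G.dist (inl a') (inl a') = 0 := SimpleGraph.dist_self
          have d3 : G.dist (inl a) (inr b₀) = 1 := dist_lr a b₀
          have d4 : G.dist (inl a') (inr b₀) = 1 := dist_lr a' b₀
          simp [doublyResolves, d1, d2, d3, d4]
        · refine ⟨Sum.inl a, (hWmem _).mpr (by simp [h0]), Sum.inr b₀,
            (hWmem _).mpr (by simp), ?_⟩
          have d1 : G.dist (inl a) (inl a) = 0 := SimpleGraph.dist_self
          have d2 : G.dist (inl a') (inl a) = 2 := dist_ll b₀ (Ne.symm ha)
          have d3 : G.dist (inl a) (inr b₀) = 1 := dist_lr a b₀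
          have d4 : G.dist (inl a') (inr b₀) = 1 := dist_lr a' b₀
          simp [doublyResolves, d1, d2, d3, d4]
      · -- left, right
        set b'' : Fin s := if b' = ⟨0, hs0⟩ then ⟨1, hs2⟩ else ⟨0, hs0⟩ with hb''
        have hbb : b'' ≠ b' := by
          by_cases hc : b' = ⟨0, hs0⟩ <;> simp [hb'', hc] <;> omega
        refine ⟨Sum.inr b'', (hWmem _).mpr (by simp), Sum.inr b',
          (hWmem _).mpr (by simp), ?_⟩
        have d1 : G.dist (inl a) (inr b'') = 1 := dist_lr a b''
        have d2 : G.dist (inr b') (inr b'') = 2 := dist_rr ⟨0, hr0⟩ (Ne.symm hbb)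
        have d3 : G.dist (inl a) (inr b') = 1 := dist_lr a b'
        have d4 : G.dist (inr b') (inr b') = 0 := SimpleGraph.dist_self
        simp [doublyResolves, d1, d2, d3, d4]
      · -- right, left
        set b'' : Fin s := if b = ⟨0, hs0⟩ then ⟨1, hs2⟩ else ⟨0, hs0⟩ with hb''
        have hbb : b'' ≠ b := by
          by_cases hc : b = ⟨0, hs0⟩ <;> simp [hb'', hc] <;> omega
        refine ⟨Sum.inr b'', (hWmem _).mpr (by simp), Sum.inr b,
          (hWmem _).mpr (by simp), ?_⟩
        have d1 : G.dist (inr b) (inr b'') = 2 := dist_rr ⟨0, hr0⟩ (Ne.symm hbb)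
        have d2 : G.dist (inl a') (inr b'') = 1 := dist_lr a' b''
        have d3 : G.dist (inr b) (inr b) = 0 := SimpleGraph.dist_self
        have d4 : G.dist (inl a') (inr b) = 1 := dist_lr a' b
        simp [doublyResolves, d1, d2, d3, d4]
      · -- both right
        have hb : b ≠ b' := by simpa using huv
        refine ⟨Sum.inr b, (hWmem _).mpr (by simp), Sum.inr b',
          (hWmem _).mpr (by simp), ?_⟩
        have d1 : G.dist (inr b) (inr b) = 0 := SimpleGraph.dist_self
        have d2 : G.dist (inr b') (inr b) = 2 := dist_rr ⟨0, hr0⟩ (Ne.symm hb)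
        have d3 : G.dist (inr b) (inr b') = 2 := dist_rr ⟨0, hr0⟩ hb
        have d4 : G.dist (inr b') (inr b') = 0 := SimpleGraph.dist_self
        simp [doublyResolves, d1, d2, d3, d4]
  refine le_antisymm (Nat.sInf_le hmem) (le_csInf ⟨_, hmem⟩ ?_)
  rintro k ⟨W, hWcard, hWres⟩
  by_contra hlt
  push_neg at hlt
  have hkle : W.card ≤ r + s - 2 := by omega
  have hcompl : 1 < Wᶜ.card := by
    rw [Finset.card_compl]
    simp only [Fintype.card_sum, Fintype.card_fin]
    omega
  obtain ⟨x, hx, y, hy, hxy⟩ := Finset.one_lt_card.mp hcompl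
  rw [Finset.mem_compl] at hx hy
  -- no two missing vertices on the same side
  have claimL : ∀ a a' : Fin r, a ≠ a' → inl a ∉ W → inl a' ∉ W → False := by
    intro a a' ha haW ha'W
    obtain ⟨z, hz, w, hw, hres⟩ := hWres (inl a) (inl a') (by simpa using ha)
    have key : ∀ z : Fin r ⊕ Fin s, z ∈ (W : Set (Fin r ⊕ Fin s)) →
        G.dist (inl a) z = G.dist (inl a') z := by
      intro z hz
      rcases z with c | c
      · have hca : c ≠ a := by rintro rfl; exact haW (Finset.mem_coe.mp hz)
        have hca' : c ≠ a' := by rintro rfl; exact ha'W (Finset.mem_coe.mp hz)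
        rw [dist_ll b₀ (Ne.symm hca), dist_ll b₀ (Ne.symm hca')]
      · rw [dist_lr, dist_lr]
    exact hres (by rw [key z hz, key w hw]; ring)
  have claimR : ∀ b b' : Fin s, b ≠ b' → inr b ∉ W → inr b' ∉ W → False := by
    intro b b' hb hbW hb'W
    obtain ⟨z, hz, w, hw, hres⟩ := hWres (inr b) (inr b') (by simpa using hb)
    have key : ∀ z : Fin r ⊕ Fin s, z ∈ (W : Set (Fin r ⊕ Fin s)) →
        G.dist (inr b) z = G.dist (inr b') z := by
      intro z hz
      rcases z with c | c
      · rw [dist_rl, dist_rl]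
      · have hcb : c ≠ b := by rintro rfl; exact hbW (Finset.mem_coe.mp hz)
        have hcb' : c ≠ b' := by rintro rfl; exact hb'W (Finset.mem_coe.mp hz)
        rw [dist_rr ⟨0, hr0⟩ (Ne.symm hcb), dist_rr ⟨0, hr0⟩ (Ne.symm hcb')]
    exact hres (by rw [key z hz, key w hw]; ring)
  -- one missing vertex on each side leads to a contradiction
  have claimMix : ∀ (a : Fin r) (b : Fin s), inl a ∉ W → inr b ∉ W → False := by
    intro a b haW hbW
    by_cases hL : ∃ c : Fin r, inl c ∈ W
    case pos =>
      set a₀ : Fin r := hL.choose with ha₀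
      have ha₀W : inl a₀ ∈ W := hL.choose_spec
      have P : ∀ c : Fin r, inl c ∈ W → c = a₀ := by
        intro c hc
        have hca : c ≠ a := by rintro rfl; exact haW hc
        have ha₀a : a₀ ≠ a := by intro h; rw [h] at ha₀W; exact haW ha₀W
        have h1 : c.val ≠ a.val := fun h => hca (Fin.ext h)
        have h2 : a₀.val ≠ a.val := fun h => ha₀a (Fin.ext h)
        have := c.isLt; have := a.isLt; have := a₀.isLt
        exact Fin.ext (by omega)
      obtain ⟨z, hz, w, hw, hres⟩ := hWres (inl a₀) (inr b) (by simp)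
      have key : ∀ z : Fin r ⊕ Fin s, z ∈ (W : Set (Fin r ⊕ Fin s)) →
          (G.dist (inl a₀) z : ℤ) - G.dist (inr b) z = -1 := by
        intro z hz
        rcases z with c | c
        · have hc : c = a₀ := P c (Finset.mem_coe.mp hz)
          subst hc
          rw [SimpleGraph.dist_self, dist_rl]
          norm_num
        · have hcb : c ≠ b := by rintro rfl; exact hbW (Finset.mem_coe.mp hz)
          rw [dist_lr, dist_rr ⟨0, hr0⟩ (Ne.symm hcb)]
          norm_num
      exact hres (by rw [key z hz, key w hw])
    case neg =>
      obtain ⟨z, hz, w, hw, hres⟩ := hWres (inl a) (inr b) (by simp)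
      have key : ∀ z : Fin r ⊕ Fin s, z ∈ (W : Set (Fin r ⊕ Fin s)) →
          (G.dist (inl a) z : ℤ) - G.dist (inr b) z = -1 := by
        intro z hz
        rcases z with c | c
        · exact absurd ⟨c, Finset.mem_coe.mp hz⟩ hL
        · have hcb : c ≠ b := by rintro rfl; exact hbW (Finset.mem_coe.mp hz)
          rw [dist_lr, dist_rr ⟨0, hr0⟩ (Ne.symm hcb)]
          norm_num
      exact hres (by rw [key z hz, key w hw])
  rcases x with a | b <;> rcases y with a' | b'
  · exact claimL a a' (by simpa using hxy) hx hy
  · exact claimMix a b' hx hy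
  · exact claimMix a' b hy hx
  · exact claimR b b' (by simpa using hxy) hx hy
end

section
/- Let G be a finite simple connected graph of order n ≥ 2 with diameter d = diam(G). Then ψ(G) ≤ n − d + 1. -/
open SimpleGraph

private lemma aux_dist_start {V : Type*} {G : SimpleGraph V} (hG : G.Connected) :
    ∀ {u v : V} (p : G.Walk u v) (i : ℕ), G.dist u (p.getVert i) ≤ i := by
  intro u v p
  induction p with
  | nil => intro i; simp [SimpleGraph.Walk.getVert, SimpleGraph.dist_self]
  | @cons u u' v h q ih =>
    intro i
    cases i with
    | zero => simp
    | succ i =>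
      rw [SimpleGraph.Walk.getVert_cons_succ]
      calc G.dist u (q.getVert i) ≤ G.dist u u' + G.dist u' (q.getVert i) :=
            hG.dist_triangle
        _ ≤ 1 + i := by
            have h1 : G.dist u u' ≤ 1 := by
              have := G.dist_le h.toWalk
              simpa using this
            exact Nat.add_le_add h1 (ih i)
        _ = i + 1 := by omega

private lemma aux_dist_end {V : Type*} {G : SimpleGraph V} (hG : G.Connected) :
    ∀ {u v : V} (p : G.Walk u v) (i : ℕ), G.dist (p.getVert i) v ≤ p.length - i := by
  intro u v p
  induction p with
  | nil =>
    intro i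
    rw [SimpleGraph.Walk.getVert_of_length_le _ (Nat.zero_le i), SimpleGraph.dist_self]
    exact Nat.zero_le _
  | @cons u u' v h q ih =>
    intro i
    cases i with
    | zero =>
      simp only [SimpleGraph.Walk.getVert_zero]
      calc G.dist u v ≤ G.dist u u' + G.dist u' v := hG.dist_triangle
        _ ≤ 1 + q.length := by
            have h1 : G.dist u u' ≤ 1 := by
              have := G.dist_le h.toWalk
              simpa using this
            have h2 := ih 0
            simp only [SimpleGraph.Walk.getVert_zero, Nat.sub_zero] at h2
            exact Nat.add_le_add h1 h2
        _ ≤ (SimpleGraph.Walk.cons h q).length - 0 := by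
            simp [SimpleGraph.Walk.length_cons]; omega
    | succ i =>
      rw [SimpleGraph.Walk.getVert_cons_succ]
      have := ih i
      simp only [SimpleGraph.Walk.length_cons]
      omega

/-- For a connected graph of order `n ≥ 2` with diameter `d`, `ψ(G) ≤ n − d + 1`. -/
theorem stmt_5 {V : Type*} [Fintype V] (G : SimpleGraph V) (hG : G.Connected)
    (hn : 2 ≤ Fintype.card V) :
    psi G ≤ Fintype.card V - G.diam + 1 := by
  classical
  have hNe : Nonempty V := Fintype.card_pos_iff.mp (by omega)
  have hNt : Nontrivial V := Fintype.one_lt_card_iff_nontrivial.mp (by omega)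
  -- the extended diameter is finite
  have hetop : G.ediam ≠ ⊤ := by
    obtain ⟨a, b, hab⟩ := G.exists_edist_eq_ediam_of_finite
    rw [← hab]
    exact edist_ne_top_iff_reachable.mpr (hG a b)
  have hD0 : G.diam ≠ 0 := by
    rw [SimpleGraph.diam, Ne, ENat.toNat_eq_zero]
    push_neg
    exact ⟨SimpleGraph.ediam_ne_zero, hetop⟩
  set D := G.diam with hDdef
  obtain ⟨u, v, huv⟩ := G.exists_dist_eq_diam (α := V)
  obtain ⟨p, hp⟩ := hG.exists_walk_length_eq_dist u v
  rw [huv] at hp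
  rw [← hDdef] at huv hp
  -- distances along the walk
  have hkey : ∀ i ≤ D, G.dist u (p.getVert i) = i ∧ G.dist (p.getVert i) v = D - i := by
    intro i hi
    have h1 := aux_dist_start hG p i
    have h2 := aux_dist_end hG p i
    rw [hp] at h2
    have h3 : D ≤ G.dist u (p.getVert i) + G.dist (p.getVert i) v :=
      huv ▸ hG.dist_triangle
    omega
  -- the internal vertices of the walk
  set S : Finset V := (Finset.Ioo 0 D).image p.getVert with hSdef
  have hinj : Set.InjOn p.getVert ↑(Finset.Ioo 0 D) := by
    intro i hi j hj hij
    simp only [Finset.coe_Ioo, Set.mem_Ioo] at hi hj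
    have h1 := (hkey i (le_of_lt hi.2)).1
    have h2 := (hkey j (le_of_lt hj.2)).1
    rw [hij] at h1
    omega
  have hScard : S.card = D - 1 := by
    rw [hSdef, Finset.card_image_of_injOn hinj, Nat.card_Ioo]; omega
  have hmemS : ∀ x ∈ S, ∃ i, 0 < i ∧ i < D ∧ p.getVert i = x ∧
      G.dist u x = i ∧ G.dist x v = D - i := by
    intro x hx
    rw [hSdef, Finset.mem_image] at hx
    obtain ⟨i, hi, hix⟩ := hx
    simp only [Finset.mem_Ioo] at hi
    obtain ⟨h1, h2⟩ := hkey i (le_of_lt hi.2)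
    exact ⟨i, hi.1, hi.2, hix, by rw [← hix]; exact ⟨h1, h2⟩⟩
  have huS : u ∉ S := by
    intro h
    obtain ⟨i, hi0, hiD, _, hd, _⟩ := hmemS u h
    simp [SimpleGraph.dist_self] at hd
    omega
  have hvS : v ∉ S := by
    intro h
    obtain ⟨i, hi0, hiD, _, _, hd⟩ := hmemS v h
    simp [SimpleGraph.dist_self] at hd
    omega
  set W : Finset V := Finset.univ \ S with hWdef
  have hmemW : ∀ x, x ∈ W ↔ x ∉ S := by
    intro x; simp [hWdef]
  have huW : u ∈ W := (hmemW u).mpr huS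
  have hvW : v ∈ W := (hmemW v).mpr hvS
  -- W is a doubly resolving set
  have hres : IsDoublyResolvingSet G ↑W := by
    intro a b hab
    by_cases ha : a ∈ S
    · by_cases hb : b ∈ S
      · -- both internal: resolved by u and v
        obtain ⟨i, _, hiD, hia, hua, hva⟩ := hmemS a ha
        obtain ⟨j, _, hjD, hjb, hub, hvb⟩ := hmemS b hb
        refine ⟨u, by simpa using huW, v, by simpa using hvW, ?_⟩
        have hij : i ≠ j := by
          intro h; apply hab; rw [← hia, ← hjb, h]
        unfold doublyResolves
        rw [G.dist_comm (u := a) (v := u), G.dist_comm (u := b) (v := u), hua, hub, hva, hvb]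
        push_cast
        omega
      · -- a internal, b outside: resolved by some pair among b, u, v
        obtain ⟨i, _, hiD, hia, hua, hva⟩ := hmemS a ha
        have hbW : b ∈ W := (hmemW b).mpr hb
        by_contra hcon
        push_neg at hcon
        have hbu := hcon b (by simpa using hbW) u (by simpa using huW)
        have hbv := hcon b (by simpa using hbW) v (by simpa using hvW)
        unfold doublyResolves at hbu hbv
        push_neg at hbu hbv
        have hpos : 0 < G.dist a b := hG.pos_dist_of_ne hab
        have htri : D ≤ G.dist u b + G.dist b v := huv ▸ hG.dist_triangle
        rw [G.dist_comm (u := a) (v := u), hua, SimpleGraph.dist_self,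
          G.dist_comm (u := b) (v := u)] at hbu
        rw [hva, SimpleGraph.dist_self] at hbv
        omega
    · by_cases hb : b ∈ S
      · -- b internal, a outside
        obtain ⟨j, _, hjD, hjb, hub, hvb⟩ := hmemS b hb
        have haW : a ∈ W := (hmemW a).mpr ha
        by_contra hcon
        push_neg at hcon
        have hau := hcon a (by simpa using haW) u (by simpa using huW)
        have hav := hcon a (by simpa using haW) v (by simpa using hvW)
        unfold doublyResolves at hau hav
        push_neg at hau hav
        have hpos : 0 < G.dist b a := hG.pos_dist_of_ne (Ne.symm hab)
        have htri : D ≤ G.dist u a + G.dist a v := huv ▸ hG.dist_triangle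
        rw [G.dist_comm (u := b) (v := u), hub, SimpleGraph.dist_self,
          G.dist_comm (u := a) (v := u)] at hau
        rw [hvb, SimpleGraph.dist_self] at hav
        omega
      · -- both outside: resolved by themselves
        refine ⟨a, by simpa using (hmemW a).mpr ha, b, by simpa using (hmemW b).mpr hb, ?_⟩
        unfold doublyResolves
        rw [SimpleGraph.dist_self, SimpleGraph.dist_self, G.dist_comm (u := b) (v := a)]
        have hpos : 0 < G.dist a b := hG.pos_dist_of_ne hab
        push_cast
        omega
  -- cardinality bound
  have hDn : D ≤ Fintype.card V - 1 := by
    have hpath : p.IsPath := p.isPath_of_length_eq_dist (by rw [hp, huv])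
    have := hpath.length_lt
    omega
  have hWcard : W.card = Fintype.card V - D + 1 := by
    rw [hWdef, Finset.card_sdiff_of_subset (Finset.subset_univ S), Finset.card_univ, hScard]
    omega
  calc psi G ≤ W.card := Nat.sInf_le ⟨W, rfl, hres⟩
    _ = Fintype.card V - D + 1 := hWcard
    _ = Fintype.card V - G.diam + 1 := by rw [hDdef]
end

section
/- Let G be a finite simple connected graph of diameter d and let P = (v_0, v_1, …, v_d) be a shortest path in G of length d. Then the set W = V(G) \ {v_1, v_2, …, v_{d−1}} is a doubly resolving set for G. -/
open SimpleGraph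

private lemma aux_dist {V : Type*} [DecidableEq V] {G : SimpleGraph V} (hG : G.Connected)
    {u w : V} (p : G.Walk u w) (hshortest : G.dist u w = p.length)
    {a : V} (ha : a ∈ p.support) :
    G.dist u a = (p.takeUntil a ha).length ∧
      G.dist a w = (p.dropUntil a ha).length := by
  have h1 : G.dist u a ≤ (p.takeUntil a ha).length := SimpleGraph.dist_le _
  have h2 : G.dist a w ≤ (p.dropUntil a ha).length := SimpleGraph.dist_le _
  have h3 : (p.takeUntil a ha).length + (p.dropUntil a ha).length = p.length := by
    conv_rhs => rw [← p.take_spec ha]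
    rw [Walk.length_append]
  have h4 : G.dist u w ≤ G.dist u a + G.dist a w := hG.dist_triangle
  omega

private lemma aux_getVert {V : Type*} [DecidableEq V] {G : SimpleGraph V} (hG : G.Connected)
    {u w : V} (p : G.Walk u w) (hshortest : G.dist u w = p.length)
    {a : V} (ha : a ∈ p.support) :
    p.getVert (G.dist u a) = a := by
  rw [(aux_dist hG p hshortest ha).1]
  have h := Walk.getVert_append (p.takeUntil a ha) (p.dropUntil a ha) (p.takeUntil a ha).length
  rw [p.take_spec ha] at h
  simpa using h

/-- If `p` is a shortest path of length `diam G` between `u` and `w`, then the set of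
all vertices except the internal vertices of `p` is a doubly resolving set for `G`. -/
theorem stmt_6 {V : Type*} [Fintype V] (G : SimpleGraph V) (hG : G.Connected)
    (u w : V) (p : G.Walk u w) (hp : p.IsPath)
    (hlen : p.length = G.diam) (hshortest : G.dist u w = p.length) :
    IsDoublyResolvingSet G {x : V | x = u ∨ x = w ∨ x ∉ p.support} := by
  classical
  intro a b hab
  by_contra hcon
  push_neg at hcon
  simp only [doublyResolves, not_not, ne_eq, Set.mem_setOf_eq] at hcon
  have hu : u = u ∨ u = w ∨ u ∉ p.support := Or.inl rfl
  have hw : w = u ∨ w = w ∨ w ∉ p.support := Or.inr (Or.inl rfl)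
  -- all differences are equal to c
  have key : ∀ x, (x = u ∨ x = w ∨ x ∉ p.support) →
      (G.dist a x : ℤ) - G.dist b x = (G.dist a u : ℤ) - G.dist b u := by
    intro x hx
    exact hcon x hx u hu
  have keyw : (G.dist a w : ℤ) - G.dist b w = (G.dist a u : ℤ) - G.dist b u := key w hw
  have habpos : 0 < G.dist a b := hG.pos_dist_of_ne hab
  have hbapos : 0 < G.dist b a := hG.pos_dist_of_ne (Ne.symm hab)
  by_cases hA : a = u ∨ a = w ∨ a ∉ p.support
  · by_cases hB : b = u ∨ b = w ∨ b ∉ p.support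
    · -- both in W
      have k1 := key a hA
      have k2 := key b hB
      rw [SimpleGraph.dist_self] at k1 k2
      have hab' : G.dist a b = G.dist b a := SimpleGraph.dist_comm
      omega
    · -- a ∈ W, b internal
      push_neg at hB
      obtain ⟨hb1, hb2, hbsupp⟩ := hB
      have hbd := aux_dist hG p hshortest hbsupp
      have hbd2 : (p.takeUntil b hbsupp).length + (p.dropUntil b hbsupp).length = p.length := by
        conv_rhs => rw [← p.take_spec hbsupp]
        rw [Walk.length_append]
      have hbsum : G.dist u b + G.dist b w = G.dist u w := by omega
      have k1 := key a hA
      rw [SimpleGraph.dist_self] at k1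
      have t1 : G.dist a u + G.dist a w ≥ G.dist u w := by
        calc G.dist u w ≤ G.dist u a + G.dist a w := hG.dist_triangle
        _ = G.dist a u + G.dist a w := by rw [SimpleGraph.dist_comm]
      have hbu : G.dist b u = G.dist u b := SimpleGraph.dist_comm
      omega
  · push_neg at hA
    obtain ⟨ha1, ha2, hasupp⟩ := hA
    have had := aux_dist hG p hshortest hasupp
    have had2 : (p.takeUntil a hasupp).length + (p.dropUntil a hasupp).length = p.length := by
      conv_rhs => rw [← p.take_spec hasupp]
      rw [Walk.length_append]
    have hasum : G.dist u a + G.dist a w = G.dist u w := by omega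
    have hau : G.dist a u = G.dist u a := SimpleGraph.dist_comm
    by_cases hB : b = u ∨ b = w ∨ b ∉ p.support
    · -- a internal, b ∈ W
      have k2 := key b hB
      rw [SimpleGraph.dist_self] at k2
      have t1 : G.dist b u + G.dist b w ≥ G.dist u w := by
        calc G.dist u w ≤ G.dist u b + G.dist b w := hG.dist_triangle
        _ = G.dist b u + G.dist b w := by rw [SimpleGraph.dist_comm]
      omega
    · -- both internal
      push_neg at hB
      obtain ⟨hb1, hb2, hbsupp⟩ := hB
      have hbd := aux_dist hG p hshortest hbsupp
      have hbd2 : (p.takeUntil b hbsupp).length + (p.dropUntil b hbsupp).length = p.length := by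
        conv_rhs => rw [← p.take_spec hbsupp]
        rw [Walk.length_append]
      have hbsum : G.dist u b + G.dist b w = G.dist u w := by omega
      have hbu : G.dist b u = G.dist u b := SimpleGraph.dist_comm
      have hdeq : G.dist u a = G.dist u b := by
        have := keyw
        have := key u hu
        omega
      have := aux_getVert hG p hshortest hasupp
      have h2 := aux_getVert hG p hshortest hbsupp
      rw [hdeq] at this
      exact hab (this.symm.trans h2)
end

section
/- Let G be a finite simple connected graph of order n ≥ 3 with maximum degree Δ. If ψ(G) = Δ = n − 1, then G is isomorphic to K_n, K_{1,n−1}, or K_2 ∨ K̄_{n−2}. -/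
open SimpleGraph

/-- The join `G ∨ H` of two graphs on disjoint vertex sets: it contains the edges of
`G`, the edges of `H`, and all edges between vertices of `G` and vertices of `H`. -/
def graphJoin {α β : Type*} (G : SimpleGraph α) (H : SimpleGraph β) :
    SimpleGraph (α ⊕ β) where
  Adj x y := match x, y with
    | .inl a, .inl b => G.Adj a b
    | .inr a, .inr b => H.Adj a b
    | .inl _, .inr _ => True
    | .inr _, .inl _ => True
  symm := ⟨by
    rintro (a | a) (b | b) h
    · exact G.adj_symm h
    · trivial
    · trivial
    · exact H.adj_symm h⟩
  loopless := ⟨by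
    rintro (a | a) h
    · exact G.irrefl h
    · exact H.irrefl h⟩

section Aux

set_option linter.unusedSectionVars false

variable {V : Type*} [Fintype V] [DecidableEq V] (G : SimpleGraph V) [DecidableRel G.Adj]

lemma aux_dr_symm {x y u v : V} (h : doublyResolves G x y u v) : doublyResolves G x y v u := by
  unfold doublyResolves at *
  omega

lemma aux_exists_univ (hdeg : G.maxDegree = Fintype.card V - 1) (hn : 1 ≤ Fintype.card V) :
    ∃ c : V, ∀ w, w ≠ c → G.Adj c w := by
  have : Nonempty V := Fintype.card_pos_iff.mp (by omega)
  obtain ⟨c, hc⟩ := G.exists_maximal_degree_vertex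
  refine ⟨c, fun w hw => ?_⟩
  have hsub : G.neighborFinset c ⊆ Finset.univ.erase c := by
    intro x hx
    rw [Finset.mem_erase]
    exact ⟨(G.ne_of_adj (by rwa [G.mem_neighborFinset] at hx)).symm, Finset.mem_univ x⟩
  have hd : (G.neighborFinset c).card = G.degree c := rfl
  have hcard : (Finset.univ.erase c).card ≤ (G.neighborFinset c).card := by
    rw [Finset.card_erase_of_mem (Finset.mem_univ c), Finset.card_univ, hd, ← hc]
    omega
  have heq := Finset.eq_of_subset_of_card_le hsub hcard
  have : w ∈ G.neighborFinset c := by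
    rw [heq, Finset.mem_erase]; exact ⟨hw, Finset.mem_univ w⟩
  rwa [G.mem_neighborFinset] at this

lemma aux_dist_adj {u v : V} (h : G.Adj u v) : G.dist u v = 1 :=
  SimpleGraph.dist_eq_one_iff_adj.mpr h

lemma aux_dist_nonadj (hG : G.Connected) {c : V} (hc : ∀ w, w ≠ c → G.Adj c w)
    {u v : V} (huv : u ≠ v) (h : ¬ G.Adj u v) : G.dist u v = 2 := by
  have hu : u ≠ c := by rintro rfl; exact h (hc v (Ne.symm huv))
  have hv : v ≠ c := by rintro rfl; exact h ((hc u huv).symm)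
  have hle : G.dist u v ≤ 2 := by
    refine le_trans (SimpleGraph.dist_le (Walk.cons (hc u hu).symm (Walk.cons (hc v hv) Walk.nil))) ?_
    simp
  have h0 : G.dist u v ≠ 0 := fun h0 => huv ((hG.dist_eq_zero_iff).mp h0)
  have h1 : G.dist u v ≠ 1 := fun h1 => h (SimpleGraph.dist_eq_one_iff_adj.mp h1)
  omega

lemma aux_dist_bounds (hG : G.Connected) {c : V} (hc : ∀ w, w ≠ c → G.Adj c w)
    {u v : V} (huv : u ≠ v) : 1 ≤ G.dist u v ∧ G.dist u v ≤ 2 := by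
  by_cases h : G.Adj u v
  · rw [aux_dist_adj G h]; omega
  · rw [aux_dist_nonadj G hG hc huv h]; omega

end Aux

section Aux2
set_option linter.unusedSectionVars false
variable {V : Type*} [Fintype V] [DecidableEq V] (G : SimpleGraph V) [DecidableRel G.Adj]

lemma aux_main_drs (hG : G.Connected) {c p p₀ q : V}
    (hc : ∀ w, w ≠ c → G.Adj c w)
    (hpc : p ≠ c)
    (hp₀p : p₀ ≠ p) (hp₀c : p₀ ≠ c) (hpp₀ : ¬ G.Adj p p₀)
    (hqp : q ≠ p) (hqc : q ≠ c) (hpq : G.Adj p q)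
    (hB : ∀ u, u ≠ p → u ≠ c → (∀ w, w ≠ u → G.Adj u w) →
      ∃ r, G.Adj p r ∧ r ≠ u ∧ r ≠ c) :
    IsDoublyResolvingSet G (((Finset.univ.erase p).erase c : Finset V) : Set V) := by
  have hmem : ∀ x : V, x ≠ c → x ≠ p →
      x ∈ (((Finset.univ.erase p).erase c : Finset V) : Set V) := by
    intro x h1 h2
    simp [Finset.mem_erase, h1, h2]
  have key : ∀ u v : V, u ≠ v →
      (v = p ∨ (v = c ∧ u ≠ p) ∨ (u ≠ p ∧ u ≠ c ∧ v ≠ p ∧ v ≠ c)) →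
      ∃ x ∈ (((Finset.univ.erase p).erase c : Finset V) : Set V),
        ∃ y ∈ (((Finset.univ.erase p).erase c : Finset V) : Set V),
          doublyResolves G x y u v := by
    intro u v huv hcase
    rcases hcase with hvp | ⟨hvc, hup⟩ | ⟨hup, huc, hvp, hvc⟩
    · -- v = p
      rw [hvp] at huv ⊢
      by_cases huc : u = c
      · subst huc
        refine ⟨p₀, hmem p₀ hp₀c hp₀p, q, hmem q hqc hqp, ?_⟩
        have d1 : G.dist u p₀ = 1 := aux_dist_adj G (hc p₀ hp₀c)
        have d2 : G.dist p p₀ = 2 := aux_dist_nonadj G hG hc (Ne.symm hp₀p) hpp₀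
        have d3 : G.dist u q = 1 := aux_dist_adj G (hc q hqc)
        have d4 : G.dist p q = 1 := aux_dist_adj G hpq
        unfold doublyResolves
        rw [d1, d2, d3, d4]
        norm_num
      · by_cases hadj : G.Adj p u
        · by_cases hy : ∃ y, (y ≠ c ∧ y ≠ p) ∧ y ≠ u ∧ (¬ G.Adj u y ∨ G.Adj p y)
          · obtain ⟨y, ⟨hyc, hyp⟩, hyu, hY⟩ := hy
            refine ⟨u, hmem u huc huv, y, hmem y hyc hyp, ?_⟩
            have d1 : G.dist u u = 0 := SimpleGraph.dist_self
            have d2 : G.dist p u = 1 := aux_dist_adj G hadj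
            unfold doublyResolves
            rcases hY with hY | hY
            · have d3 : G.dist u y = 2 := aux_dist_nonadj G hG hc (Ne.symm hyu) hY
              have b4 := aux_dist_bounds G hG hc (Ne.symm hyp)
              rw [d1, d2, d3]
              omega
            · have d4 : G.dist p y = 1 := aux_dist_adj G hY
              have b3 := aux_dist_bounds G hG hc (Ne.symm hyu)
              rw [d1, d2, d4]
              omega
          · exfalso
            push_neg at hy
            have huniv : ∀ w, w ≠ u → G.Adj u w := by
              intro w hwu
              by_cases hwc : w = c
              · subst hwc; exact (hc u huc).symm
              · by_cases hwp : w = p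
                · subst hwp; exact hadj.symm
                · exact (hy w ⟨hwc, hwp⟩ hwu).1
            obtain ⟨r, hr1, hr2, hr3⟩ := hB u huv huc huniv
            have hrp : r ≠ p := fun h => G.irrefl (v := p) (h ▸ hr1)
            exact (hy r ⟨hr3, hrp⟩ hr2).2 hr1
        · obtain ⟨y, hyc, hyp, hyu⟩ : ∃ y, y ≠ c ∧ y ≠ p ∧ y ≠ u := by
            by_cases h : q = u
            · refine ⟨p₀, hp₀c, hp₀p, ?_⟩
              rintro rfl
              exact hpp₀ (h.symm ▸ hpq)
            · exact ⟨q, hqc, hqp, h⟩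
          refine ⟨u, hmem u huc huv, y, hmem y hyc hyp, ?_⟩
          have d1 : G.dist u u = 0 := SimpleGraph.dist_self
          have d2 : G.dist p u = 2 := aux_dist_nonadj G hG hc (Ne.symm huv) hadj
          have b3 := aux_dist_bounds G hG hc (Ne.symm hyu)
          have b4 := aux_dist_bounds G hG hc (Ne.symm hyp)
          unfold doublyResolves
          rw [d1, d2]
          omega
    · -- v = c
      rw [hvc] at huv ⊢
      obtain ⟨y, hyc, hyp, hyu⟩ : ∃ y, y ≠ c ∧ y ≠ p ∧ y ≠ u := by
        by_cases h : q = u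
        · refine ⟨p₀, hp₀c, hp₀p, ?_⟩
          rintro rfl
          exact hpp₀ (h.symm ▸ hpq)
        · exact ⟨q, hqc, hqp, h⟩
      refine ⟨u, hmem u huv hup, y, hmem y hyc hyp, ?_⟩
      have d1 : G.dist u u = 0 := SimpleGraph.dist_self
      have d2 : G.dist c u = 1 := aux_dist_adj G (hc u huv)
      have d3 : G.dist c y = 1 := aux_dist_adj G (hc y hyc)
      have b4 := aux_dist_bounds G hG hc (Ne.symm hyu)
      unfold doublyResolves
      rw [d1, d2, d3]
      omega
    · refine ⟨u, hmem u huc hup, v, hmem v hvc hvp, ?_⟩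
      have d1 : G.dist u u = 0 := SimpleGraph.dist_self
      have d2 : G.dist v v = 0 := SimpleGraph.dist_self
      have b1 := aux_dist_bounds G hG hc huv
      have b2 := aux_dist_bounds G hG hc (Ne.symm huv)
      unfold doublyResolves
      rw [d1, d2]
      omega
  intro u v huv
  by_cases hvp : v = p
  · exact key u v huv (Or.inl hvp)
  by_cases hup : u = p
  · obtain ⟨x, hx, y, hy, h⟩ := key v u (Ne.symm huv) (Or.inl hup)
    exact ⟨x, hx, y, hy, aux_dr_symm G h⟩
  by_cases hvc : v = c
  · exact key u v huv (Or.inr (Or.inl ⟨hvc, hup⟩))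
  by_cases huc : u = c
  · obtain ⟨x, hx, y, hy, h⟩ := key v u (Ne.symm huv) (Or.inr (Or.inl ⟨huc, hvp⟩))
    exact ⟨x, hx, y, hy, aux_dr_symm G h⟩
  · exact key u v huv (Or.inr (Or.inr ⟨hup, huc, hvp, hvc⟩))

end Aux2

section Aux3
set_option linter.unusedSectionVars false
variable {V : Type*} [Fintype V] [DecidableEq V] (G : SimpleGraph V) [DecidableRel G.Adj]

lemma aux_contra (hG : G.Connected) (hn : 3 ≤ Fintype.card V)
    (hpsi : psi G = Fintype.card V - 1) {c p p₀ q : V}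
    (hc : ∀ w, w ≠ c → G.Adj c w)
    (hpc : p ≠ c)
    (hp₀p : p₀ ≠ p) (hp₀c : p₀ ≠ c) (hpp₀ : ¬ G.Adj p p₀)
    (hqp : q ≠ p) (hqc : q ≠ c) (hpq : G.Adj p q)
    (hB : ∀ u, u ≠ p → u ≠ c → (∀ w, w ≠ u → G.Adj u w) →
      ∃ r, G.Adj p r ∧ r ≠ u ∧ r ≠ c) : False := by
  have hW := aux_main_drs G hG hc hpc hp₀p hp₀c hpp₀ hqp hqc hpq hB
  have hcmem : c ∈ Finset.univ.erase p := Finset.mem_erase.mpr ⟨hpc.symm, Finset.mem_univ c⟩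
  have hcard : ((Finset.univ.erase p).erase c).card = Fintype.card V - 2 := by
    rw [Finset.card_erase_of_mem hcmem, Finset.card_erase_of_mem (Finset.mem_univ p),
      Finset.card_univ]
    omega
  have hle : psi G ≤ Fintype.card V - 2 := Nat.sInf_le ⟨_, hcard, hW⟩
  omega

end Aux3

/-- If `G` is a connected graph of order `n ≥ 3` with maximum degree `Δ` and
`ψ(G) = Δ = n − 1`, then `G` is `K_n`, `K_{1,n−1}`, or `K_2 ∨ K̄_{n−2}`. -/
theorem stmt_8 {V : Type*} [Fintype V] [DecidableEq V] (G : SimpleGraph V)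
    [DecidableRel G.Adj] (hG : G.Connected) (hn : 3 ≤ Fintype.card V)
    (hpsi : psi G = G.maxDegree) (hdeg : G.maxDegree = Fintype.card V - 1) :
    Nonempty (G ≃g completeGraph (Fin (Fintype.card V))) ∨
    Nonempty (G ≃g completeBipartiteGraph (Fin 1) (Fin (Fintype.card V - 1))) ∨
    Nonempty (G ≃g
      graphJoin (completeGraph (Fin 2)) (⊥ : SimpleGraph (Fin (Fintype.card V - 2)))) := by
  classical
  rw [hdeg] at hpsi
  obtain ⟨c, hc⟩ := aux_exists_univ G hdeg (by omega)
  -- Claim A: two non-universal vertices are never adjacent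
  have claimA : ∀ p q : V, (¬ ∀ w, w ≠ p → G.Adj p w) → (¬ ∀ w, w ≠ q → G.Adj q w) →
      G.Adj p q → False := by
    intro p q hp hq hpq
    push_neg at hp
    obtain ⟨p₀, hp₀p, hpp₀⟩ := hp
    have hpc : p ≠ c := by
      rintro rfl
      exact hpp₀ (hc p₀ hp₀p)
    have hp₀c : p₀ ≠ c := by
      rintro rfl
      exact hpp₀ ((hc p hpc).symm)
    have hqc : q ≠ c := by
      rintro rfl
      exact hq hc
    have hqp : q ≠ p := fun h => G.irrefl (v := p) (h ▸ hpq)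
    exact aux_contra G hG hn hpsi hc hpc hp₀p hp₀c hpp₀ hqp hqc hpq
      (fun u hup huc huniv => ⟨q, hpq, fun h => hq (by rw [h]; exact huniv), hqc⟩)
  -- Claim B: no three universal vertices together with a non-universal vertex
  have claimB : ∀ c₁ c₂ c₃ p : V, c₁ ≠ c₂ → c₁ ≠ c₃ → c₂ ≠ c₃ →
      (∀ w, w ≠ c₁ → G.Adj c₁ w) → (∀ w, w ≠ c₂ → G.Adj c₂ w) →
      (∀ w, w ≠ c₃ → G.Adj c₃ w) → (¬ ∀ w, w ≠ p → G.Adj p w) → False := by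
    intro c₁ c₂ c₃ p h12 h13 h23 hu1 hu2 hu3 hp
    have hpc1 : p ≠ c₁ := by rintro rfl; exact hp hu1
    have hpc2 : p ≠ c₂ := by rintro rfl; exact hp hu2
    have hpc3 : p ≠ c₃ := by rintro rfl; exact hp hu3
    push_neg at hp
    obtain ⟨p₀, hp₀p, hpp₀⟩ := hp
    have hp₀c : p₀ ≠ c₁ := by
      rintro rfl
      exact hpp₀ ((hu1 p hpc1).symm)
    refine aux_contra G hG hn hpsi hu1 hpc1 hp₀p hp₀c hpp₀
      (Ne.symm hpc2) h12.symm ((hu2 p hpc2).symm) ?_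
    intro u hup huc huniv
    by_cases h : u = c₂
    · exact ⟨c₃, (hu3 p hpc3).symm, by rw [h]; exact h23.symm, h13.symm⟩
    · exact ⟨c₂, (hu2 p hpc2).symm, fun hh => h hh.symm, h12.symm⟩
  by_cases hcomp : ∀ u v : V, u ≠ v → G.Adj u v
  · -- complete graph
    left
    refine ⟨⟨Fintype.equivFin V, ?_⟩⟩
    intro a b
    show Fintype.equivFin V a ≠ Fintype.equivFin V b ↔ G.Adj a b
    constructor
    · intro hne
      exact hcomp a b (fun h => hne (congrArg _ h))
    · intro hadj
      exact (Fintype.equivFin V).injective.ne (G.ne_of_adj hadj)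
  · push_neg at hcomp
    obtain ⟨a, b, hab, hnab⟩ := hcomp
    have hanu : ¬ ∀ w, w ≠ a → G.Adj a w := fun h => hnab (h b (Ne.symm hab))
    right
    by_cases h2 : ∃ c', c' ≠ c ∧ (∀ w, w ≠ c' → G.Adj c' w)
    · -- two universal vertices: join case
      right
      obtain ⟨c', hc'c, hc'⟩ := h2
      have honly : ∀ x, (∀ w, w ≠ x → G.Adj x w) → x = c ∨ x = c' := by
        intro x hx
        by_contra hcon
        push_neg at hcon
        exact claimB c c' x a hc'c.symm (Ne.symm hcon.1) (Ne.symm hcon.2) hc hc' hx hanu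
      set P : V → Prop := fun x => x = c ∨ x = c' with hP
      have card2 : Fintype.card {x // P x} = 2 := by
        rw [Fintype.card_subtype]
        have hfil : Finset.filter (fun x => P x) Finset.univ = {c, c'} := by
          ext x; simp [hP]
        rw [hfil]
        rw [Finset.card_insert_of_notMem (by simp [hc'c.symm]), Finset.card_singleton]
      have cardc : Fintype.card {x // ¬ P x} = Fintype.card V - 2 := by
        rw [Fintype.card_subtype_compl, card2]
      have e1 : {x // P x} ≃ Fin 2 := Fintype.equivFinOfCardEq card2
      have e2 : {x // ¬ P x} ≃ Fin (Fintype.card V - 2) := Fintype.equivFinOfCardEq cardc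
      have hux : ∀ x, P x → ∀ w, w ≠ x → G.Adj x w := by
        rintro x (rfl | rfl) w hw
        · exact hc w hw
        · exact hc' w hw
      have heL : ∀ (x : V) (h : P x),
          ((Equiv.sumCompl P).symm.trans (e1.sumCongr e2)) x = Sum.inl (e1 ⟨x, h⟩) := by
        intro x h
        rw [Equiv.trans_apply, Equiv.sumCompl_symm_apply_of_pos h, Equiv.sumCongr_apply,
          Sum.map_inl]
      have heR : ∀ (x : V) (h : ¬ P x),
          ((Equiv.sumCompl P).symm.trans (e1.sumCongr e2)) x = Sum.inr (e2 ⟨x, h⟩) := by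
        intro x h
        rw [Equiv.trans_apply, Equiv.sumCompl_symm_apply_of_neg h, Equiv.sumCongr_apply,
          Sum.map_inr]
      refine ⟨⟨(Equiv.sumCompl P).symm.trans (e1.sumCongr e2), ?_⟩⟩
      intro u v
      by_cases hu : P u
      · by_cases hv : P v
        · rw [heL u hu, heL v hv]
          show e1 ⟨u, hu⟩ ≠ e1 ⟨v, hv⟩ ↔ G.Adj u v
          constructor
          · intro hne
            have huv : u ≠ v := by
              rintro rfl
              exact hne (congrArg e1 (Subtype.ext rfl))
            exact hux u hu v (Ne.symm huv)
          · intro hadj heq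
            exact G.ne_of_adj hadj (Subtype.mk_eq_mk.mp (e1.injective heq))
        · rw [heL u hu, heR v hv]
          show True ↔ G.Adj u v
          simp only [true_iff]
          exact hux u hu v (fun h => hv (h ▸ hu))
      · by_cases hv : P v
        · rw [heR u hu, heL v hv]
          show True ↔ G.Adj u v
          simp only [true_iff]
          exact (hux v hv u (fun h => hu (h ▸ hv))).symm
        · rw [heR u hu, heR v hv]
          show False ↔ G.Adj u v
          simp only [false_iff]
          exact fun hadj => claimA u v (fun h => hu (honly u h)) (fun h => hv (honly v h)) hadj
    · -- exactly one universal vertex: star case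
      left
      push_neg at h2
      have honly : ∀ x, (∀ w, w ≠ x → G.Adj x w) → x = c := by
        intro x hx
        by_contra hcon
        obtain ⟨w, hw, hnadj⟩ := h2 x hcon
        exact hnadj (hx w hw)
      set P : V → Prop := fun x => x = c with hP
      have card1 : Fintype.card {x // P x} = 1 := Fintype.card_subtype_eq c
      have cardc : Fintype.card {x // ¬ P x} = Fintype.card V - 1 := by
        rw [Fintype.card_subtype_compl, card1]
      have e1 : {x // P x} ≃ Fin 1 := Fintype.equivFinOfCardEq card1
      have e2 : {x // ¬ P x} ≃ Fin (Fintype.card V - 1) := Fintype.equivFinOfCardEq cardc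
      have heL : ∀ (x : V) (h : P x),
          ((Equiv.sumCompl P).symm.trans (e1.sumCongr e2)) x = Sum.inl (e1 ⟨x, h⟩) := by
        intro x h
        rw [Equiv.trans_apply, Equiv.sumCompl_symm_apply_of_pos h, Equiv.sumCongr_apply,
          Sum.map_inl]
      have heR : ∀ (x : V) (h : ¬ P x),
          ((Equiv.sumCompl P).symm.trans (e1.sumCongr e2)) x = Sum.inr (e2 ⟨x, h⟩) := by
        intro x h
        rw [Equiv.trans_apply, Equiv.sumCompl_symm_apply_of_neg h, Equiv.sumCongr_apply,
          Sum.map_inr]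
      refine ⟨⟨(Equiv.sumCompl P).symm.trans (e1.sumCongr e2), ?_⟩⟩
      intro u v
      by_cases hu : P u
      · by_cases hv : P v
        · rw [heL u hu, heL v hv]
          have huv : u = v := hu.trans hv.symm
          subst huv
          exact iff_of_false (by simp) (G.irrefl (v := u))
        · rw [heL u hu, heR v hv]
          refine iff_of_true (by simp) ?_
          have : u = c := hu
          subst this
          exact hc v hv
      · by_cases hv : P v
        · rw [heR u hu, heL v hv]
          refine iff_of_true (by simp) ?_
          have : v = c := hv
          subst this
          exact (hc u hu).symm
        · rw [heR u hu, heR v hv]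
          refine iff_of_false (by simp) ?_
          exact fun hadj => claimA u v (fun h => hu (honly u h)) (fun h => hv (honly v h)) hadj
end

section
/- Let G be a finite simple connected graph of order at least 2 and let v be a vertex of degree 1 in G. Then v belongs to every doubly resolving set of G of minimum cardinality (every doubly basis of G). -/
open SimpleGraph

/-- If `v` is a pendant vertex with unique neighbor `u`, then for any `w ≠ v`,
`d(v,w) = d(u,w) + 1`. -/
lemma pendant_dist {V : Type*} [Fintype V] (G : SimpleGraph V) [DecidableRel G.Adj]
    (hG : G.Connected) {v u : V} (hu : G.neighborFinset v = {u}) {w : V} (hw : w ≠ v) :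
    G.dist v w = G.dist u w + 1 := by
  have hadj : G.Adj v u := by
    rw [← SimpleGraph.mem_neighborFinset, hu]; simp
  have hle : G.dist v w ≤ G.dist u w + 1 := by
    have h1 : G.dist v u = 1 := SimpleGraph.dist_eq_one_iff_adj.mpr hadj
    calc G.dist v w ≤ G.dist v u + G.dist u w := hG.dist_triangle
      _ = G.dist u w + 1 := by omega
  have hge : G.dist u w + 1 ≤ G.dist v w := by
    obtain ⟨p, hp⟩ := hG.exists_walk_length_eq_dist v w
    cases p with
    | nil => exact absurd rfl hw
    | cons h q =>
      rename_i b
      have hb : b = u := by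
        have : b ∈ G.neighborFinset v := by
          rw [SimpleGraph.mem_neighborFinset]; exact h
        rw [hu] at this; simpa using this
      subst hb
      have : G.dist b w ≤ q.length := SimpleGraph.dist_le q
      simp [SimpleGraph.Walk.length_cons] at hp
      omega
  omega

/-- A vertex of degree `1` belongs to every doubly resolving set of minimum
cardinality (every doubly basis). -/
theorem stmt_10 {V : Type*} [Fintype V] (G : SimpleGraph V) [DecidableRel G.Adj]
    (hG : G.Connected) (hn : 2 ≤ Fintype.card V) (v : V) (hv : G.degree v = 1)
    (B : Finset V) (hB : IsDoublyResolvingSet G ↑B) (hBmin : B.card = psi G) :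
    v ∈ B := by
  rw [SimpleGraph.degree] at hv
  obtain ⟨u, hu⟩ := Finset.card_eq_one.mp hv
  have hadj : G.Adj v u := by
    rw [← SimpleGraph.mem_neighborFinset, hu]; simp
  have huv : u ≠ v := fun h => G.irrefl (h ▸ hadj)
  by_contra hvB
  obtain ⟨x, hx, y, hy, hxy⟩ := hB u v huv
  have hx' : x ≠ v := fun h => hvB (h ▸ hx)
  have hy' : y ≠ v := fun h => hvB (h ▸ hy)
  apply hxy
  rw [pendant_dist G hG hu hx', pendant_dist G hG hu hy']
  push_cast
  ring
end

section
/- Let G be a finite simple connected graph of order at least 2. Then ψ(G) ≥ l(G), where l(G) is the number of vertices of degree 1 in G. -/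
open SimpleGraph

lemma leaf_dist {V : Type*} (G : SimpleGraph V) (hG : G.Connected) {v u x : V}
    (hadj : G.Adj v u) (huniq : ∀ w, G.Adj v w → w = u) (hx : x ≠ v) :
    G.dist v x = G.dist u x + 1 := by
  have h1 : G.dist v u = 1 := dist_eq_one_iff_adj.2 hadj
  have hle : G.dist v x ≤ G.dist u x + 1 := by
    have := hG.dist_triangle (u := v) (v := u) (w := x)
    omega
  have hge : G.dist u x + 1 ≤ G.dist v x := by
    obtain ⟨p, hp⟩ := (hG v x).exists_walk_length_eq_dist
    cases p with
    | nil => exact absurd rfl hx.symm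
    | @cons _ w _ h q =>
      have hw : w = u := huniq w h
      have h2 : G.dist u x ≤ q.length := by rw [← hw]; exact dist_le q
      simp only [SimpleGraph.Walk.length_cons] at hp
      omega
  omega

/-- The doubly resolving number of a connected graph of order `≥ 2` is at least the
number of its leaves (vertices of degree `1`). -/
theorem stmt_11 {V : Type*} [Fintype V] (G : SimpleGraph V) [DecidableRel G.Adj]
    (hG : G.Connected) (hn : 2 ≤ Fintype.card V) :
    (Finset.univ.filter fun v : V => G.degree v = 1).card ≤ psi G := by
  apply le_csInf
  · refine ⟨Fintype.card V, Finset.univ, Finset.card_univ, ?_⟩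
    intro u v huv
    refine ⟨u, by simp, v, by simp, ?_⟩
    have hpos : 0 < G.dist u v := hG.pos_dist_of_ne huv
    have hcomm : G.dist v u = G.dist u v := dist_comm ..
    simp only [doublyResolves, dist_self, hcomm]
    push_cast
    omega
  · rintro k ⟨W, rfl, hW⟩
    apply Finset.card_le_card
    intro v hv
    simp only [Finset.mem_filter, Finset.mem_univ, true_and] at hv
    by_contra hvW
    obtain ⟨u, hu⟩ := Finset.card_eq_one.mp (by rw [← hv]; rfl :
      (G.neighborFinset v).card = 1)
    have hadj : G.Adj v u := by
      rw [← SimpleGraph.mem_neighborFinset, hu]; exact Finset.mem_singleton_self u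
    have huniq : ∀ w, G.Adj v w → w = u := by
      intro w hw
      have := (SimpleGraph.mem_neighborFinset G v w).2 hw
      rw [hu, Finset.mem_singleton] at this; exact this
    obtain ⟨x, hx, y, hy, hres⟩ := hW u v hadj.symm.ne
    have hxv : x ≠ v := fun h => hvW (h ▸ hx)
    have hyv : y ≠ v := fun h => hvW (h ▸ hy)
    have h1 := leaf_dist G hG hadj huniq hxv
    have h2 := leaf_dist G hG hadj huniq hyv
    apply hres
    rw [h1, h2]
    push_cast
    ring
end

section
/- Let G be a finite simple connected unicyclic graph with unique cycle C(G), and let W be a doubly resolving set for the cycle C(G) (viewed as a graph with its own cycle distance). If U is the set of vertices of W that have degree 2 in G, then L(G) ∪ U is a doubly resolving set for G, where L(G) is the set of leaves of G. -/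
open SimpleGraph

namespace DRAux

variable {V : Type*} [Fintype V] [DecidableEq V] {G : SimpleGraph V}
set_option linter.unusedSectionVars false

/-- If every walk from `x` to `y` passes through `m`, distance splits. -/
lemma dist_split (hG : G.Connected) {x y m : V} (hm : ∀ p : G.Walk x y, m ∈ p.support) :
    G.dist x y = G.dist x m + G.dist m y := by
  refine le_antisymm hG.dist_triangle ?_
  obtain ⟨p, hp⟩ := hG.exists_walk_length_eq_dist x y
  have h1 := dist_le (p.takeUntil m (hm p))
  have h2 := dist_le (p.dropUntil m (hm p))
  have h3 := congrArg Walk.length (p.take_spec (hm p))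
  rw [Walk.length_append] at h3
  omega

/-- Every vertex with a walk to `a` is, after deleting one edge `s(a,b)`,
still reachable to `a` or to `b`. -/
lemma reach_side {b z : V} : ∀ {a : V}, G.Walk z a →
    ((G.deleteEdges {s(a, b)}).Reachable z a ∨ (G.deleteEdges {s(a, b)}).Reachable z b) := by
  intro a p
  induction p with
  | nil => exact Or.inl (Reachable.refl _)
  | @cons u v w h q ih =>
    by_cases he : s(u, v) = s(w, b)
    · rw [Sym2.eq_iff] at he
      rcases he with ⟨rfl, rfl⟩ | ⟨rfl, rfl⟩
      · exact Or.inl (Reachable.refl _)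
      · exact Or.inr (Reachable.refl _)
    · have hadj : (G.deleteEdges {s(w, b)}).Adj u v := by
        simp only [deleteEdges_adj, Set.mem_singleton_iff]
        exact ⟨h, he⟩
      rcases ih with h' | h'
      · exact Or.inl (hadj.reachable.trans h')
      · exact Or.inr (hadj.reachable.trans h')

lemma cross_mem {a b x y : V} (hbr : ¬(G.deleteEdges {s(a, b)}).Reachable a b)
    (hx : (G.deleteEdges {s(a, b)}).Reachable x a)
    (hy : (G.deleteEdges {s(a, b)}).Reachable y b) (p : G.Walk x y) :
    a ∈ p.support ∧ b ∈ p.support := by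
  by_cases hme : s(a, b) ∈ p.edges
  · exact ⟨p.fst_mem_support_of_mem_edges hme, p.snd_mem_support_of_mem_edges hme⟩
  · exfalso
    have p' := p.toDeleteEdges {s(a, b)} (fun e' h' => by
      simp only [Set.mem_singleton_iff]; rintro rfl; exact hme h')
    exact hbr (hx.symm.trans ((p'.reachable).trans hy))

lemma cross_dist (hG : G.Connected) {a b x y : V} (hab : G.Adj a b)
    (hbr : ¬(G.deleteEdges {s(a, b)}).Reachable a b)
    (hx : (G.deleteEdges {s(a, b)}).Reachable x a)
    (hy : (G.deleteEdges {s(a, b)}).Reachable y b) :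
    G.dist x y = G.dist x a + 1 + G.dist b y := by
  have hb : ∀ p : G.Walk x y, b ∈ p.support := fun p => (cross_mem hbr hx hy p).2
  have ha : ∀ p : G.Walk x b, a ∈ p.support := fun p =>
    (cross_mem hbr hx (Reachable.refl _) p).1
  have h1 : G.dist x y = G.dist x b + G.dist b y := dist_split hG hb
  have h2 : G.dist x b = G.dist x a + G.dist a b := dist_split hG ha
  have h3 : G.dist a b = 1 := dist_eq_one_iff_adj.mpr hab
  omega

end DRAux

namespace DRAux2
open DRAux
variable {V : Type*} [Fintype V] [DecidableEq V] {G : SimpleGraph V}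
set_option linter.unusedSectionVars false

variable {v₀ : V} {c : G.Walk v₀ v₀}

/-- Transfer membership through `huniq`. -/
lemma mem_cycle_support
    (huniq : ∀ (u : V) (c' : G.Walk u u), c'.IsCycle →
      c'.support.toFinset = c.support.toFinset)
    {u : V} {c' : G.Walk u u} (hc' : c'.IsCycle) {x : V} (hx : x ∈ c'.support) :
    x ∈ c.support := by
  have := huniq u c' hc'
  have hx' : x ∈ c'.support.toFinset := List.mem_toFinset.mpr hx
  rw [this] at hx'
  exact List.mem_toFinset.mp hx'

/-- Any edge incident to a vertex off the cycle is a bridge. -/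
lemma bridge_nonS
    (huniq : ∀ (u : V) (c' : G.Walk u u), c'.IsCycle →
      c'.support.toFinset = c.support.toFinset)
    {w z : V} (hadj : G.Adj w z) (hz : z ∉ c.support) :
    ¬(G.deleteEdges {s(w, z)}).Reachable w z := by
  have hb : G.IsBridge s(w, z) := by
    rw [isBridge_iff_forall_cycle_notMem hadj]
    refine fun u p hp he => ?_
    exact hz (mem_cycle_support huniq hp (p.snd_mem_support_of_mem_edges he))
  exact isBridge_iff.mp hb

/-- The cycle's vertices remain mutually reachable after deleting an edge that is
not an edge of the cycle. -/
lemma scon {e : Sym2 V} (he : e ∉ c.edges) {x y : V}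
    (hx : x ∈ c.support) (hy : y ∈ c.support) :
    (G.deleteEdges {e}).Reachable x y := by
  have hconn := c.toSubgraph_connected
  have hxv : x ∈ c.toSubgraph.verts := c.mem_verts_toSubgraph.mpr hx
  have hyv : y ∈ c.toSubgraph.verts := c.mem_verts_toSubgraph.mpr hy
  have hr : c.toSubgraph.coe.Reachable ⟨x, hxv⟩ ⟨y, hyv⟩ := hconn _ _
  have hmap : ∀ {a b : c.toSubgraph.verts}, c.toSubgraph.coe.Adj a b →
      (G.deleteEdges {e}).Adj a b := by
    intro a b hab
    simp only [deleteEdges_adj, Set.mem_singleton_iff]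
    refine ⟨hab.adj_sub, fun h => ?_⟩
    have : s((a : V), (b : V)) ∈ c.edges := by
      rw [← Walk.mem_edges_toSubgraph]
      exact hab
    rw [h] at this
    exact he this
  exact hr.map ⟨Subtype.val, hmap⟩

end DRAux2

namespace DRAux3
open DRAux DRAux2
variable {V : Type*} [Fintype V] [DecidableEq V] {G : SimpleGraph V}
set_option linter.unusedSectionVars false
variable {v₀ : V} {c : G.Walk v₀ v₀}

lemma closed_end_mem_tail {x : V} {p : G.Walk x x} (hp : ¬p.Nil) : x ∈ p.support.tail := by
  obtain ⟨u, h, q, rfl⟩ := Walk.not_nil_iff.mp hp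
  simp [Walk.support_cons]

lemma mem_support_iff_mem_tail {x u : V} {p : G.Walk x x} (hp : ¬p.Nil) :
    u ∈ p.support ↔ u ∈ p.support.tail := by
  constructor
  · intro h
    rw [p.support_eq_cons] at h
    rcases List.mem_cons.mp h with rfl | h
    · exact closed_end_mem_tail hp
    · exact h
  · intro h
    rw [p.support_eq_cons]
    exact List.mem_cons_of_mem _ h

lemma rotate_not_nil {x : V} {p : G.Walk v₀ v₀} (hp : ¬p.Nil) (hx : x ∈ p.support) :
    ¬(p.rotate x hx).Nil := by
  rw [Walk.not_nil_iff_lt_length] at hp ⊢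
  have h2 := (p.rotate_darts x hx).perm.length_eq
  rw [Walk.length_darts, Walk.length_darts] at h2
  omega

lemma mem_rotate {x u : V} {p : G.Walk v₀ v₀} (hp : ¬p.Nil) (hx : x ∈ p.support) :
    u ∈ (p.rotate x hx).support ↔ u ∈ p.support := by
  rw [mem_support_iff_mem_tail (rotate_not_nil hp hx), mem_support_iff_mem_tail hp]
  exact (p.support_rotate x hx).mem_iff

end DRAux3

namespace DRAux4
open DRAux DRAux2 DRAux3
variable {V : Type*} [Fintype V] [DecidableEq V] {G : SimpleGraph V}
set_option linter.unusedSectionVars false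
variable {v₀ : V} {c : G.Walk v₀ v₀}

lemma mem_support_of_both' {a b : V} {p : G.Walk a b} {e : Sym2 V} {w : V}
    (he : e ∈ p.edges) (hw : w ∈ e) : w ∈ p.support := by
  induction e with
  | h a b =>
    rcases Sym2.mem_iff.mp hw with rfl | rfl
    · exact p.fst_mem_support_of_mem_edges he
    · exact p.snd_mem_support_of_mem_edges he

lemma chordfree (hc : c.IsCycle)
    (huniq : ∀ (u : V) (c' : G.Walk u u), c'.IsCycle →
      c'.support.toFinset = c.support.toFinset)
    {x y : V} (hx : x ∈ c.support) (hy : y ∈ c.support) (hxy : G.Adj x y) :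
    s(x, y) ∈ c.edges := by
  by_contra hch
  set c' := c.rotate x hx with hc'def
  have hc' : c'.IsCycle := hc.rotate hx
  have hedges : ∀ e, e ∈ c'.edges ↔ e ∈ c.edges := fun e => (c.rotate_edges x hx).mem_iff
  have hy' : y ∈ c'.support := (mem_rotate hc.not_nil hx).mpr hy
  have hxyne : x ≠ y := G.ne_of_adj hxy
  set p1 := c'.takeUntil y hy' with hp1def
  set p2 := c'.dropUntil y hy' with hp2def
  have hspec := c'.take_spec hy'
  have hsupN : c'.support.tail.Nodup := hc'.support_nodup
  have hsup : c'.support = p1.support ++ p2.support.tail := by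
    rw [← hspec, Walk.support_append]
  have htail : c'.support.tail = p1.support.tail ++ p2.support.tail := by
    rw [hsup, p1.support_eq_cons]; rfl
  rw [htail] at hsupN
  obtain ⟨hn1, hn2, hdisj⟩ := List.nodup_append.mp hsupN
  have hxmem2 : x ∈ p2.support.tail := Walk.end_mem_tail_support_of_ne (Ne.symm hxyne) p2
  have hymem1 : y ∈ p1.support.tail := Walk.end_mem_tail_support_of_ne hxyne p1
  have hp2path : p2.IsPath := by
    rw [Walk.isPath_def, p2.support_eq_cons]
    exact List.nodup_cons.mpr ⟨fun h => hdisj _ hymem1 _ h rfl, hn2⟩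
  have hch2 : s(x, y) ∉ p2.edges := by
    intro h
    exact hch ((hedges _).mp (c'.edges_dropUntil_subset hy' h))
  have hC1 : (Walk.cons hxy p2).IsCycle := (Walk.cons_isCycle_iff p2 hxy).mpr ⟨hp2path, hch2⟩
  have hfin := huniq x (Walk.cons hxy p2) hC1
  -- find an internal vertex of p1
  have hlen1 : p1.length ≠ 0 := fun h => hxyne (Walk.eq_of_length_eq_zero h)
  have hfirstedge : s(x, p1.getVert 1) ∈ p1.edges := by
    have h0 := p1.toSubgraph_adj_getVert (by omega : 0 < p1.length)
    have : s(p1.getVert 0, p1.getVert 1) ∈ p1.toSubgraph.edgeSet := h0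
    rw [Walk.mem_edges_toSubgraph] at this
    simpa using this
  obtain ⟨z, hzdef⟩ : ∃ z, p1.getVert 1 = z := ⟨_, rfl⟩
  rw [hzdef] at hfirstedge
  have hadjxz : G.Adj x z := p1.adj_of_mem_edges hfirstedge
  have hz1 : z ∈ p1.support := p1.snd_mem_support_of_mem_edges hfirstedge
  have hztail : z ∈ p1.support.tail := by
    rw [p1.support_eq_cons] at hz1
    rcases List.mem_cons.mp hz1 with h | h
    · exact absurd h.symm (G.ne_of_adj hadjxz)
    · exact h
  have hzy : z ≠ y := by
    rintro rfl
    exact hch ((hedges _).mp (c'.edges_takeUntil_subset hy' hfirstedge))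
  have hznot2 : z ∉ p2.support.tail := fun h => hdisj _ hztail _ h rfl
  have hzc : z ∈ c.support := by
    rw [← mem_rotate hc.not_nil hx]
    exact c'.support_takeUntil_subset hy' hz1
  have hzfin : z ∈ (Walk.cons hxy p2).support.toFinset := by
    rw [hfin]; exact List.mem_toFinset.mpr hzc
  rw [List.mem_toFinset, Walk.support_cons] at hzfin
  rcases List.mem_cons.mp hzfin with h | h
  · exact (G.ne_of_adj hadjxz) h.symm
  · rw [p2.support_eq_cons] at h
    rcases List.mem_cons.mp h with h | h
    · exact hzy h
    · exact hznot2 h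

/-- Each cycle vertex has exactly two incident cycle edges. -/
lemma cyc_two_nbrs (hc : c.IsCycle) {w : V} (hw : w ∈ c.support) :
    ∃ n1 n2 : V, n1 ≠ n2 ∧ G.Adj w n1 ∧ G.Adj w n2 ∧
      s(w, n1) ∈ c.edges ∧ s(w, n2) ∈ c.edges ∧
      ∀ e ∈ c.edges, w ∈ e → e = s(w, n1) ∨ e = s(w, n2) := by
  set c' := c.rotate w hw with hc'def
  have hc' : c'.IsCycle := hc.rotate hw
  have hedges : ∀ e, e ∈ c'.edges ↔ e ∈ c.edges := fun e => (c.rotate_edges w hw).mem_iff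
  obtain ⟨n1, h1, q, hq⟩ := Walk.not_nil_iff.mp hc'.not_nil
  have hqpath : q.IsPath ∧ s(w, n1) ∉ q.edges := by
    rw [← Walk.cons_isCycle_iff q h1, ← hq]; exact hc'
  have hqnonnil : ¬q.Nil := by
    rw [Walk.nil_iff_length_eq]
    have h3 := hc'.three_le_length
    rw [hq, Walk.length_cons] at h3
    omega
  have hrev : ¬q.reverse.Nil := by
    rwa [Walk.not_nil_iff_lt_length, Walk.length_reverse,
      ← Walk.not_nil_iff_lt_length]
  obtain ⟨n2, h2, q2, hq2⟩ := Walk.not_nil_iff.mp hrev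
  have hq2path : q2.IsPath := by
    have := hqpath.1.reverse
    rw [hq2] at this
    exact this.of_cons
  have hwq2 : w ∉ q2.support := by
    have := hqpath.1.reverse
    rw [hq2, Walk.cons_isPath_iff] at this
    exact this.2
  refine ⟨n1, n2, ?_, h1, h2, ?_, ?_, ?_⟩
  · rintro rfl
    have : s(w, n1) ∈ q.edges := by
      have : s(w, n1) ∈ q.reverse.edges := by rw [hq2]; simp
      rwa [Walk.edges_reverse, List.mem_reverse] at this
    exact hqpath.2 this
  · rw [← hedges, hq]; simp
  · rw [← hedges, hq]
    have : s(w, n2) ∈ q.edges := by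
      have : s(w, n2) ∈ q.reverse.edges := by rw [hq2]; simp
      rwa [Walk.edges_reverse, List.mem_reverse] at this
    simp [this]
  · intro e he hwe
    rw [← hedges, hq, Walk.edges_cons] at he
    rcases List.mem_cons.mp he with h | h
    · exact Or.inl h
    · right
      have he2 : e ∈ q.reverse.edges := by rwa [Walk.edges_reverse, List.mem_reverse]
      rw [hq2, Walk.edges_cons] at he2
      rcases List.mem_cons.mp he2 with h' | h'
      · exact h'
      · exact absurd (mem_support_of_both' h' hwe) hwq2

end DRAux4

namespace DRAux5
open DRAux DRAux2 DRAux3 DRAux4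
variable {V : Type*} [Fintype V] [DecidableEq V] {G : SimpleGraph V}
set_option linter.unusedSectionVars false
variable {v₀ : V} {c : G.Walk v₀ v₀}

lemma edge_not_in_cycle {z w : V} (hz : z ∉ c.support) : s(w, z) ∉ c.edges := by
  intro h
  exact hz (c.snd_mem_support_of_mem_edges h)

lemma bush_not_reach
    (huniq : ∀ (u : V) (c' : G.Walk u u), c'.IsCycle →
      c'.support.toFinset = c.support.toFinset)
    {w z : V} (hw : w ∈ c.support) (hz : z ∉ c.support) (hadj : G.Adj w z) :
    ∀ x ∈ c.support, ¬(G.deleteEdges {s(w, z)}).Reachable z x := by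
  intro x hx hr
  have hsc : (G.deleteEdges {s(w, z)}).Reachable x w :=
    scon (edge_not_in_cycle hz) hx hw
  exact bridge_nonS huniq hadj hz ((hr.trans hsc).symm)

lemma proj_exists (hG : G.Connected) (hc : c.IsCycle)
    (huniq : ∀ (u : V) (c' : G.Walk u u), c'.IsCycle →
      c'.support.toFinset = c.support.toFinset)
    (u : V) :
    ∃ a, a ∈ c.support ∧ ∀ x ∈ c.support, G.dist u x = G.dist u a + G.dist a x := by
  obtain ⟨n, hn⟩ : ∃ n, G.dist u v₀ = n := ⟨_, rfl⟩
  induction n using Nat.strong_induction_on generalizing u with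
  | _ n ih =>
  by_cases hu : u ∈ c.support
  · exact ⟨u, hu, fun x hx => by rw [SimpleGraph.dist_self]; omega⟩
  · have hv₀ : v₀ ∈ c.support := c.start_mem_support
    have hdpos : 0 < G.dist u v₀ := hG.pos_dist_of_ne (fun h => hu (h ▸ hv₀))
    obtain ⟨p, hppath, hplen⟩ := hG.exists_path_of_dist u v₀
    have hpnonnil : ¬p.Nil := by
      rw [Walk.not_nil_iff_lt_length]; omega
    obtain ⟨g, hug, q, hq⟩ := Walk.not_nil_iff.mp hpnonnil
    have hqlen : q.length = G.dist u v₀ - 1 := by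
      have := hplen
      rw [hq, Walk.length_cons] at this
      omega
    have hgv₀ : G.dist g v₀ = G.dist u v₀ - 1 := by
      have h1 : G.dist g v₀ ≤ q.length := dist_le q
      have h2 : G.dist u v₀ ≤ 1 + G.dist g v₀ := by
        have := hG.dist_triangle (v := g) (u := u) (w := v₀)
        have hug1 : G.dist u g = 1 := dist_eq_one_iff_adj.mpr hug
        omega
      omega
    have hbr : ¬(G.deleteEdges {s(g, u)}).Reachable g u :=
      bridge_nonS huniq hug.symm hu
    have hedge : s(g, u) ∉ c.edges := edge_not_in_cycle hu
    -- all cycle vertices lie on the g-side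
    have hside : ∀ x ∈ c.support, (G.deleteEdges {s(g, u)}).Reachable x g := by
      intro x hx
      rcases reach_side (b := u) ((hG x g).some) with h | h
      · exact h
      · exfalso
        have hv₀u : (G.deleteEdges {s(g, u)}).Reachable v₀ u :=
          (scon hedge hv₀ hx).trans h
        have := cross_dist hG (hug.symm : G.Adj g u) hbr
          (Reachable.refl g) hv₀u
        rw [SimpleGraph.dist_self] at this
        omega
    have hcross : ∀ x ∈ c.support, G.dist u x = 1 + G.dist g x := by
      intro x hx
      have := cross_dist hG (hug.symm : G.Adj g u) hbr (hside x hx)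
        (Reachable.refl u)
      rw [SimpleGraph.dist_self] at this
      have hc1 : G.dist x u = G.dist u x := @dist_comm _ _ x u
      have hc2 : G.dist x g = G.dist g x := @dist_comm _ _ x g
      omega
    by_cases hg : g ∈ c.support
    · refine ⟨g, hg, fun x hx => ?_⟩
      rw [hcross x hx, dist_eq_one_iff_adj.mpr hug]
    · obtain ⟨a, ha, haprop⟩ := ih (G.dist g v₀) (by omega) g rfl
      refine ⟨a, ha, fun x hx => ?_⟩
      rw [hcross x hx, haprop x hx, hcross a ha]
      omega

lemma proj_unique (hG : G.Connected) {u a b : V}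
    (hain : a ∈ c.support) (hbin : b ∈ c.support)
    (ha : ∀ x ∈ c.support, G.dist u x = G.dist u a + G.dist a x)
    (hb : ∀ x ∈ c.support, G.dist u x = G.dist u b + G.dist b x) : a = b := by
  have h1 := ha b hbin
  have h2 := hb a hain
  have h3 : G.dist a b = G.dist b a := @dist_comm _ _ a b
  have : G.dist a b = 0 := by omega
  exact hG.dist_eq_zero_iff.mp this

end DRAux5

namespace DRAux6
open DRAux DRAux2 DRAux3 DRAux4 DRAux5
variable {V : Type*} [Fintype V] [DecidableEq V] {G : SimpleGraph V} [DecidableRel G.Adj]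
set_option linter.unusedSectionVars false
variable {v₀ : V} {c : G.Walk v₀ v₀}

lemma dist_lt_card (hG : G.Connected) (u v : V) : G.dist u v < Fintype.card V := by
  obtain ⟨p, hpath, hlen⟩ := hG.exists_path_of_dist u v
  have := hpath.length_lt
  omega

lemma bridge_nonS₂
    (huniq : ∀ (u : V) (c' : G.Walk u u), c'.IsCycle →
      c'.support.toFinset = c.support.toFinset)
    {z w : V} (hz : z ∉ c.support) (hadj : G.Adj z w) :
    ¬(G.deleteEdges {s(z, w)}).Reachable z w := by
  intro h
  have := bridge_nonS huniq hadj.symm hz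
  rw [Sym2.eq_swap] at this
  exact this h.symm

/-- From a non-cycle vertex hanging below an edge `s(w,z)` that separates it from
the cycle, we can descend to a leaf on its side. -/
lemma descend (hG : G.Connected) (hc : c.IsCycle)
    (huniq : ∀ (u : V) (c' : G.Walk u u), c'.IsCycle →
      c'.support.toFinset = c.support.toFinset)
    {w₀ z₀ : V} (hw₀ : w₀ ∈ c.support) (hz₀ : z₀ ∉ c.support) (hadj₀ : G.Adj w₀ z₀)
    (hinv₀ : ∀ x ∈ c.support, ¬(G.deleteEdges {s(w₀, z₀)}).Reachable z₀ x) :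
    ∃ ℓ, G.degree ℓ = 1 ∧ (G.deleteEdges {s(w₀, z₀)}).Reachable z₀ ℓ := by
  have hv₀S : v₀ ∈ c.support := c.start_mem_support
  suffices h : ∀ n : ℕ, ∀ w z : V, G.Adj w z → z ∉ c.support →
      (∀ x ∈ c.support, ¬(G.deleteEdges {s(w, z)}).Reachable z x) →
      (G.deleteEdges {s(w₀, z₀)}).Reachable z₀ z →
      Fintype.card V - G.dist v₀ z ≤ n →
      ∃ ℓ, G.degree ℓ = 1 ∧ (G.deleteEdges {s(w₀, z₀)}).Reachable z₀ ℓ by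
    exact h (Fintype.card V) w₀ z₀ hadj₀ hz₀ hinv₀ (Reachable.refl _) (by omega)
  intro n
  induction n with
  | zero =>
    intro w z _ _ _ _ hm
    have := dist_lt_card hG v₀ z
    omega
  | succ n ih =>
    intro w z hadj hz hinv hreach hm
    by_cases hdeg : G.degree z = 1
    · exact ⟨z, hdeg, hreach⟩
    · -- z has a neighbor z' ≠ w
      have hwnb : w ∈ G.neighborFinset z := by
        rw [mem_neighborFinset]; exact hadj.symm
      have hcard : 1 < (G.neighborFinset z).card := by
        rw [card_neighborFinset_eq_degree]
        rcases Nat.lt_or_ge 1 (G.degree z) with h | h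
        · exact h
        · exfalso
          interval_cases hd : G.degree z
          · rw [← card_neighborFinset_eq_degree] at hd
            rw [Finset.card_eq_zero] at hd
            rw [hd] at hwnb
            simp at hwnb
          · exact hdeg rfl
      obtain ⟨z', hz'mem, hz'w⟩ := Finset.exists_mem_ne hcard w
      have hadj' : G.Adj z z' := (mem_neighborFinset _ _ _).mp hz'mem
      have hbr' : ¬(G.deleteEdges {s(z, z')}).Reachable z z' := bridge_nonS₂ huniq hz hadj'
      -- new invariant
      have hinv' : ∀ x ∈ c.support, ¬(G.deleteEdges {s(z, z')}).Reachable z' x := by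
        intro x hx hr
        obtain ⟨p, hp⟩ := hr.exists_walk_length_eq_dist
        by_cases hzp : z ∈ p.support
        · exact hbr' ⟨(p.takeUntil z hzp).reverse⟩
        · have htr : ∀ e ∈ p.edges, e ∈ (G.deleteEdges {s(w, z)}).edgeSet := by
            intro e he
            have hGe := p.edges_subset_edgeSet he
            rw [edgeSet_deleteEdges] at hGe ⊢
            refine ⟨hGe.1, ?_⟩
            intro hcon
            rw [Set.mem_singleton_iff] at hcon
            subst hcon
            exact hzp (mem_support_of_both' he (Sym2.mem_mk_right w z))
          have q := p.transfer (G.deleteEdges {s(w, z)}) htr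
          have hzz' : (G.deleteEdges {s(w, z)}).Adj z z' := by
            rw [deleteEdges_adj, Set.mem_singleton_iff]
            refine ⟨hadj', fun hcon => ?_⟩
            have : z' ∈ s(w, z) := hcon ▸ Sym2.mem_mk_right z z'
            rcases Sym2.mem_iff.mp this with h | h
            · exact hz'w h
            · exact (G.ne_of_adj hadj') h.symm
          exact hinv x hx (hzz'.reachable.trans ⟨q⟩)
      have hz'S : z' ∉ c.support := fun h => hinv' z' h (Reachable.refl _)
      have hwside : (G.deleteEdges {s(z, z')}).Reachable v₀ z := by
        rcases reach_side (b := z') ((hG v₀ z).some) with h | h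
        · exact h
        · exact absurd h.symm (hinv' v₀ hv₀S)
      have hdz' : G.dist v₀ z' = G.dist v₀ z + 1 := by
        have := cross_dist hG hadj' hbr' hwside (Reachable.refl z')
        rw [SimpleGraph.dist_self] at this
        omega
      have hreach' : (G.deleteEdges {s(w₀, z₀)}).Reachable z₀ z' := by
        refine hreach.trans (Adj.reachable ?_)
        rw [deleteEdges_adj, Set.mem_singleton_iff]
        refine ⟨hadj', fun hcon => ?_⟩
        have : w₀ ∈ s(z, z') := hcon ▸ Sym2.mem_mk_left w₀ z₀
        rcases Sym2.mem_iff.mp this with h | h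
        · exact hz (h ▸ hw₀ : z ∈ c.support)
        · exact hz'S (h ▸ hw₀ : z' ∈ c.support)
      exact ih z z' hadj' hz'S hinv' hreach' (by omega)
end DRAux6

namespace DRAux7
open DRAux DRAux2 DRAux3 DRAux4 DRAux5 DRAux6
variable {V : Type*} [Fintype V] [DecidableEq V] {G : SimpleGraph V} [DecidableRel G.Adj]
set_option linter.unusedSectionVars false
variable {v₀ : V} {c : G.Walk v₀ v₀}

lemma first_step (hG : G.Connected) {u A : V} (hne : u ≠ A) :
    ∃ (g : V) (p : G.Walk g A), G.Adj u g ∧ p.length = G.dist g A ∧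
      G.dist g A + 1 = G.dist u A ∧ u ∉ p.support := by
  obtain ⟨p₀, hpath, hlen⟩ := hG.exists_path_of_dist u A
  have hdpos : 0 < G.dist u A := hG.pos_dist_of_ne hne
  have hnonnil : ¬p₀.Nil := by rw [Walk.not_nil_iff_lt_length]; omega
  obtain ⟨g, hug, q, hq⟩ := Walk.not_nil_iff.mp hnonnil
  have hqlen : q.length = G.dist u A - 1 := by
    have := hlen; rw [hq, Walk.length_cons] at this; omega
  have hgA : G.dist g A = G.dist u A - 1 := by
    have h1 : G.dist g A ≤ q.length := dist_le q
    have h2 : G.dist u A ≤ 1 + G.dist g A := by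
      have := hG.dist_triangle (u := u) (v := g) (w := A)
      have : G.dist u g = 1 := dist_eq_one_iff_adj.mpr hug
      omega
    omega
  have husupp : u ∉ q.support := by
    have := hpath
    rw [hq, Walk.cons_isPath_iff] at this
    exact this.2
  exact ⟨g, q, hug, by omega, by omega, husupp⟩

lemma side_anchor (hG : G.Connected) (hc : c.IsCycle)
    (huniq : ∀ (u : V) (c' : G.Walk u u), c'.IsCycle →
      c'.support.toFinset = c.support.toFinset)
    {w z : V} (hw : w ∈ c.support) (hz : z ∉ c.support) (hadj : G.Adj w z)
    {y A : V} (hA : A ∈ c.support)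
    (hproj : ∀ x ∈ c.support, G.dist y x = G.dist y A + G.dist A x)
    (hne : A ≠ w) : (G.deleteEdges {s(w, z)}).Reachable y w := by
  have hbr := bridge_nonS huniq hadj hz
  rcases reach_side (b := z) ((hG y w).some) with h | h
  · exact h
  · exfalso
    have hprop : ∀ x ∈ c.support, G.dist y x = G.dist y w + G.dist w x := by
      intro x hx
      have hxside : (G.deleteEdges {s(w, z)}).Reachable x w :=
        scon (edge_not_in_cycle hz) hx hw
      have h1 := cross_dist hG hadj hbr hxside h
      have h2 := cross_dist hG hadj hbr (Reachable.refl w) h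
      rw [SimpleGraph.dist_self] at h2
      have e1 : G.dist x y = G.dist y x := @dist_comm _ _ x y
      have e2 : G.dist x w = G.dist w x := @dist_comm _ _ x w
      have e3 : G.dist w y = G.dist y w := @dist_comm _ _ w y
      omega
    exact hne (proj_unique hG hA hw hproj hprop)

lemma behind (hG : G.Connected) (hc : c.IsCycle)
    (huniq : ∀ (u : V) (c' : G.Walk u u), c'.IsCycle →
      c'.support.toFinset = c.support.toFinset)
    {u v A : V} (hu : u ∉ c.support) (hA : A ∈ c.support)
    (hb : G.dist v A = G.dist v u + G.dist u A) :
    ∀ x ∈ c.support, G.dist v x = G.dist v u + G.dist u x := by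
  have hune : u ≠ A := fun h => hu (h ▸ hA)
  obtain ⟨g, p, hug, hplen, hgA, husupp⟩ := first_step hG hune
  have hduA : 0 < G.dist u A := hG.pos_dist_of_ne hune
  have hbr : ¬(G.deleteEdges {s(g, u)}).Reachable g u := bridge_nonS huniq hug.symm hu
  have hAg : (G.deleteEdges {s(g, u)}).Reachable g A := by
    refine ⟨p.transfer _ ?_⟩
    intro e he
    have hGe := p.edges_subset_edgeSet he
    rw [edgeSet_deleteEdges]
    refine ⟨hGe, ?_⟩
    intro hcon
    rw [Set.mem_singleton_iff] at hcon
    subst hcon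
    exact husupp (mem_support_of_both' he (Sym2.mem_mk_right g u))
  have hSside : ∀ x ∈ c.support, (G.deleteEdges {s(g, u)}).Reachable x g := by
    intro x hx
    rcases reach_side (b := u) ((hG x g).some) with h | h
    · exact h
    · exfalso
      have hAu : (G.deleteEdges {s(g, u)}).Reachable A u :=
        (scon (edge_not_in_cycle hu) hA hx).trans h
      have := cross_dist hG (hug.symm : G.Adj g u) hbr (Reachable.refl g) hAu
      rw [SimpleGraph.dist_self] at this
      have e1 : G.dist g A = G.dist A g := @dist_comm _ _ g A
      have e2 : G.dist u A = G.dist A u := @dist_comm _ _ u A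
      omega
  have hvside : (G.deleteEdges {s(g, u)}).Reachable v u := by
    rcases reach_side (b := u) ((hG v g).some) with h | h
    · exfalso
      have h1 := cross_dist hG (hug.symm : G.Adj g u) hbr h (Reachable.refl u)
      rw [SimpleGraph.dist_self] at h1
      have h2 := hG.dist_triangle (u := v) (v := g) (w := A)
      have e1 : G.dist v u = G.dist u v := @dist_comm _ _ v u
      omega
    · exact h
  intro x hx
  have h1 := cross_dist hG (hug.symm : G.Adj g u) hbr (hSside x hx) hvside
  have h2 := cross_dist hG (hug.symm : G.Adj g u) hbr (hSside x hx) (Reachable.refl u)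
  rw [SimpleGraph.dist_self] at h2
  have e1 : G.dist x v = G.dist v x := @dist_comm _ _ x v
  have e2 : G.dist x u = G.dist u x := @dist_comm _ _ x u
  have e3 : G.dist u v = G.dist v u := @dist_comm _ _ u v
  omega

end DRAux7

namespace DRAux8
open DRAux DRAux2 DRAux3 DRAux4 DRAux5 DRAux6 DRAux7
variable {V : Type*} [Fintype V] [DecidableEq V] {G : SimpleGraph V} [DecidableRel G.Adj]
set_option linter.unusedSectionVars false
variable {v₀ : V} {c : G.Walk v₀ v₀}

lemma esc (hG : G.Connected) (hc : c.IsCycle)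
    (huniq : ∀ (u : V) (c' : G.Walk u u), c'.IsCycle →
      c'.support.toFinset = c.support.toFinset)
    (v : V) {u A : V} (hu : u ∉ c.support) (hA : A ∈ c.support)
    (hproj : ∀ x ∈ c.support, G.dist u x = G.dist u A + G.dist A x)
    (hnb : G.dist v A ≠ G.dist v u + G.dist u A) :
    ∃ ℓ, G.degree ℓ = 1 ∧ G.dist v ℓ = G.dist v u + G.dist u ℓ := by
  suffices h : ∀ n : ℕ, ∀ u A : V, u ∉ c.support → A ∈ c.support →
      (∀ x ∈ c.support, G.dist u x = G.dist u A + G.dist A x) →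
      G.dist v A ≠ G.dist v u + G.dist u A →
      Fintype.card V - G.dist v u ≤ n →
      ∃ ℓ, G.degree ℓ = 1 ∧ G.dist v ℓ = G.dist v u + G.dist u ℓ by
    exact h (Fintype.card V) u A hu hA hproj hnb (by omega)
  clear hu hA hproj hnb u A
  intro n
  induction n with
  | zero =>
    intro u A _ _ _ _ hm
    have := dist_lt_card hG v u
    have : G.dist v u = G.dist v u := rfl
    omega
  | succ n ih =>
    intro u A hu hA hproj hnb hm
    by_cases hdeg : G.degree u = 1
    · exact ⟨u, hdeg, by rw [SimpleGraph.dist_self]; omega⟩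
    · have hune : u ≠ A := fun h => hu (h ▸ hA)
      have hduA : 0 < G.dist u A := hG.pos_dist_of_ne hune
      obtain ⟨g, p, hug, hplen, hgA, husupp⟩ := first_step hG hune
      -- pick another neighbor u' ≠ g
      have hgnb : g ∈ G.neighborFinset u := by rw [mem_neighborFinset]; exact hug
      have hcard : 1 < (G.neighborFinset u).card := by
        rw [card_neighborFinset_eq_degree]
        rcases Nat.lt_or_ge 1 (G.degree u) with h | h
        · exact h
        · exfalso
          interval_cases hd : G.degree u
          · rw [← card_neighborFinset_eq_degree, Finset.card_eq_zero] at hd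
            rw [hd] at hgnb; simp at hgnb
          · exact hdeg rfl
      obtain ⟨u', hu'mem, hu'g⟩ := Finset.exists_mem_ne hcard g
      have hadj' : G.Adj u u' := (mem_neighborFinset _ _ _).mp hu'mem
      have hbr' : ¬(G.deleteEdges {s(u, u')}).Reachable u u' := bridge_nonS₂ huniq hu hadj'
      -- A is on the u side of s(u,u')
      have hAside : (G.deleteEdges {s(u, u')}).Reachable u A := by
        have hpr : (G.deleteEdges {s(u, u')}).Reachable g A := by
          refine ⟨p.transfer _ ?_⟩
          intro e he
          have hGe := p.edges_subset_edgeSet he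
          rw [edgeSet_deleteEdges]
          refine ⟨hGe, ?_⟩
          intro hcon
          rw [Set.mem_singleton_iff] at hcon
          subst hcon
          exact husupp (mem_support_of_both' he (Sym2.mem_mk_left u u'))
        refine Reachable.trans (Adj.reachable ?_) hpr
        rw [deleteEdges_adj, Set.mem_singleton_iff]
        refine ⟨hug, fun hcon => ?_⟩
        rw [Sym2.eq_iff] at hcon
        rcases hcon with ⟨-, rfl⟩ | ⟨rfl, rfl⟩
        · exact hu'g rfl
        · exact (G.ne_of_adj hug) rfl
      -- v is on the u side
      have hvside : (G.deleteEdges {s(u, u')}).Reachable v u := by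
        rcases reach_side (b := u') ((hG v u).some) with h | h
        · exact h
        · exfalso
          have h1 := cross_dist hG hadj' hbr' hAside.symm h
          have h2 : G.dist u v ≤ 1 + G.dist u' v := by
            have t := hG.dist_triangle (u := u) (v := u') (w := v)
            have : G.dist u u' = 1 := dist_eq_one_iff_adj.mpr hadj'
            omega
          have h3 := hG.dist_triangle (u := A) (v := u) (w := v)
          have e1 : G.dist A v = G.dist v A := @dist_comm _ _ A v
          have e2 : G.dist A u = G.dist u A := @dist_comm _ _ A u
          have e3 : G.dist u v = G.dist v u := @dist_comm _ _ u v
          -- h1 : d A v = d A u + 1 + d u' v ; so d v A ≥ d u A + d u v; with h3 equality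
          omega
      have hd1 : G.dist v u' = G.dist v u + 1 := by
        have := cross_dist hG hadj' hbr' hvside (Reachable.refl u')
        rw [SimpleGraph.dist_self] at this
        omega
      have hSside : ∀ x ∈ c.support, (G.deleteEdges {s(u, u')}).Reachable x u := by
        intro x hx
        have hedge : s(u, u') ∉ c.edges := by
          rw [Sym2.eq_swap]; exact edge_not_in_cycle hu
        exact (scon hedge hx hA).trans hAside.symm
      have hu'S : u' ∉ c.support := by
        intro h
        exact hbr' (hSside u' h).symm
      have hcrossS : ∀ x ∈ c.support, G.dist u' x = G.dist u x + 1 := by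
        intro x hx
        have := cross_dist hG hadj' hbr' (hSside x hx) (Reachable.refl u')
        rw [SimpleGraph.dist_self] at this
        have e1 : G.dist x u = G.dist u x := @dist_comm _ _ x u
        have e2 : G.dist x u' = G.dist u' x := @dist_comm _ _ x u'
        omega
      have hproj' : ∀ x ∈ c.support, G.dist u' x = G.dist u' A + G.dist A x := by
        intro x hx
        have h1 := hcrossS x hx
        have h2 := hcrossS A hA
        have h3 := hproj x hx
        omega
      have hnb' : G.dist v A ≠ G.dist v u' + G.dist u' A := by
        have h1 := hcrossS A hA
        have h2 := hG.dist_triangle (u := v) (v := u) (w := A)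
        omega
      obtain ⟨ℓ, hℓdeg, hℓ⟩ := ih u' A hu'S hA hproj' hnb' (by omega)
      refine ⟨ℓ, hℓdeg, ?_⟩
      have t1 := hG.dist_triangle (u := v) (v := u) (w := ℓ)
      have t2 : G.dist u ℓ ≤ 1 + G.dist u' ℓ := by
        have t := hG.dist_triangle (u := u) (v := u') (w := ℓ)
        have : G.dist u u' = 1 := dist_eq_one_iff_adj.mpr hadj'
        omega
      omega

end DRAux8

namespace DRAux9
open DRAux DRAux2 DRAux3 DRAux4 DRAux5 DRAux6 DRAux7 DRAux8
variable {V : Type*} [Fintype V] [DecidableEq V] {G : SimpleGraph V} [DecidableRel G.Adj]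
set_option linter.unusedSectionVars false
variable {v₀ : V} {c : G.Walk v₀ v₀}

lemma iso_le {a b : c.toSubgraph.verts} :
    G.dist ↑a ↑b ≤ c.toSubgraph.coe.dist a b := by
  have hcoe : c.toSubgraph.coe.Connected := c.toSubgraph_connected.coe
  obtain ⟨q, hq⟩ := hcoe.exists_walk_length_eq_dist a b
  calc G.dist ↑a ↑b ≤ (q.map (Subgraph.hom _)).length := dist_le _
    _ = q.length := by rw [Walk.length_map]
    _ = _ := hq

lemma iso (hG : G.Connected) (hc : c.IsCycle)
    (huniq : ∀ (u : V) (c' : G.Walk u u), c'.IsCycle →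
      c'.support.toFinset = c.support.toFinset)
    (a b : c.toSubgraph.verts) :
    c.toSubgraph.coe.dist a b = G.dist ↑a ↑b := by
  have hcoe : c.toSubgraph.coe.Connected := c.toSubgraph_connected.coe
  obtain ⟨n, hn⟩ : ∃ n, G.dist (↑a) (↑b) = n := ⟨_, rfl⟩
  induction n using Nat.strong_induction_on generalizing a with
  | _ n ih =>
  have haS : (a : V) ∈ c.support := c.mem_verts_toSubgraph.mp a.2
  have hbS : (b : V) ∈ c.support := c.mem_verts_toSubgraph.mp b.2
  by_cases hab : (a : V) = (b : V)
  · have : a = b := Subtype.ext hab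
    subst this
    simp [SimpleGraph.dist_self]
  · have hpos : 0 < n := by
      have := hG.pos_dist_of_ne hab
      omega
    obtain ⟨g, p, hag, hplen, hgb, husupp⟩ := first_step hG hab
    have hgS : g ∈ c.support := by
      by_contra hgS
      have hbr : ¬(G.deleteEdges {s(↑a, g)}).Reachable ↑a g := bridge_nonS huniq hag hgS
      have hbside : (G.deleteEdges {s(↑a, g)}).Reachable ↑b ↑a :=
        scon (edge_not_in_cycle hgS) hbS haS
      have := (cross_mem hbr hbside (Reachable.refl g) p.reverse).1
      rw [Walk.support_reverse, List.mem_reverse] at this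
      exact husupp this
    have hchord : s(↑a, g) ∈ c.edges := chordfree hc huniq haS hgS hag
    have hgv : g ∈ c.toSubgraph.verts := c.mem_verts_toSubgraph.mpr hgS
    have hcadj : c.toSubgraph.coe.Adj a ⟨g, hgv⟩ := by
      show c.toSubgraph.Adj ↑a g
      rw [← Subgraph.mem_edgeSet, Walk.mem_edges_toSubgraph]
      exact hchord
    have hIH : c.toSubgraph.coe.dist ⟨g, hgv⟩ b = G.dist g ↑b :=
      ih (n - 1) (by omega) ⟨g, hgv⟩ (show G.dist g ↑b = n - 1 by omega)
    refine le_antisymm ?_ iso_le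
    obtain ⟨q, hq⟩ := hcoe.exists_walk_length_eq_dist ⟨g, hgv⟩ b
    have := dist_le (Walk.cons hcadj q)
    rw [Walk.length_cons, hq, hIH] at this
    omega

end DRAux9


open DRAux DRAux2 DRAux3 DRAux4 DRAux5 DRAux6 DRAux7 DRAux8 DRAux9

/-- Let `G` be a connected unicyclic graph with unique cycle `c`, and let `W` be a
doubly resolving set for the cycle (as a graph in its own right). If `U` is the set
of vertices of `W` of degree `2` in `G`, then `L(G) ∪ U` is a doubly resolving set
for `G`, where `L(G)` is the set of leaves of `G`. -/
theorem stmt_13 {V : Type*} [Fintype V] [DecidableEq V] (G : SimpleGraph V)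
    [DecidableRel G.Adj] (hG : G.Connected)
    (v₀ : V) (c : G.Walk v₀ v₀) (hc : c.IsCycle)
    (huniq : ∀ (u : V) (c' : G.Walk u u), c'.IsCycle →
      c'.support.toFinset = c.support.toFinset)
    (W : Set ↑c.toSubgraph.verts) (hW : IsDoublyResolvingSet c.toSubgraph.coe W) :
    IsDoublyResolvingSet G
      ({v : V | G.degree v = 1} ∪
        Subtype.val '' {w | w ∈ W ∧ G.degree (w : V) = 2}) := by
  set T : Set V := ({v : V | G.degree v = 1} ∪
      Subtype.val '' {w | w ∈ W ∧ G.degree (w : V) = 2}) with hT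
  -- anchors
  choose a haS hap using fun u => proj_exists (c := c) hG hc huniq u
  have haid : ∀ z ∈ c.support, a z = z := by
    intro z hz
    refine proj_unique hG (haS z) hz (hap z) (fun x hx => ?_)
    rw [SimpleGraph.dist_self]
    omega
  have condS : ∀ z ∈ c.support, ∀ t : V, z ≠ t → a z ≠ t := by
    intro z hz t hne
    rw [haid z hz]; exact hne
  -- substitutes for high-degree cycle vertices
  have hsub : ∀ w ∈ c.support, G.degree w ≠ 2 → ∃ ℓ, G.degree ℓ = 1 ∧
      ∀ z, a z ≠ w → G.dist z ℓ = G.dist z w + G.dist w ℓ := by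
    intro w hw hdeg
    obtain ⟨n1, n2, hn12, hadj1, hadj2, he1, he2, hcl⟩ := cyc_two_nbrs hc hw
    have hz₀ : ∃ z₀ ∈ G.neighborFinset w, z₀ ∉ c.support := by
      by_contra hcon
      push_neg at hcon
      have : G.neighborFinset w = {n1, n2} := by
        apply Finset.Subset.antisymm
        · intro nb hnb
          have hnbadj : G.Adj w nb := (mem_neighborFinset _ _ _).mp hnb
          have hnbS : nb ∈ c.support := hcon nb hnb
          have hch := chordfree hc huniq hw hnbS hnbadj
          rcases hcl _ hch (Sym2.mem_mk_left w nb) with h | h <;>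
            rw [Sym2.eq_iff] at h <;>
          · rcases h with ⟨-, rfl⟩ | ⟨rfl, rfl⟩
            · simp
            · exact absurd rfl (G.ne_of_adj hnbadj)
        · intro nb hnb
          rw [mem_neighborFinset]
          rcases Finset.mem_insert.mp hnb with rfl | h
          · exact hadj1
          · rw [Finset.mem_singleton] at h; subst h; exact hadj2
      have : G.degree w = 2 := by
        rw [← card_neighborFinset_eq_degree, this, Finset.card_insert_of_notMem (by
          simpa using hn12), Finset.card_singleton]
      exact hdeg this
    obtain ⟨z₀, hz₀mem, hz₀S⟩ := hz₀
    have hadjz₀ : G.Adj w z₀ := (mem_neighborFinset _ _ _).mp hz₀mem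
    have hbr := bridge_nonS huniq hadjz₀ hz₀S
    have hinv := bush_not_reach huniq hw hz₀S hadjz₀
    obtain ⟨ℓ, hℓdeg, hℓreach⟩ := descend hG hc huniq hw hz₀S hadjz₀ hinv
    refine ⟨ℓ, hℓdeg, fun z hne => ?_⟩
    have hzside := side_anchor hG hc huniq hw hz₀S hadjz₀ (haS z) (hap z) hne
    exact dist_split hG (fun p => (cross_mem hbr hzside hℓreach.symm p).1)
  -- packaged substitutes
  have key : ∀ w : ↑c.toSubgraph.verts, w ∈ W → ∃ ℓ, ℓ ∈ T ∧
      ∀ z, (a z ≠ ↑w ∨ z = ↑w) → G.dist z ℓ = G.dist z ↑w + G.dist ↑w ℓ := by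
    intro w hwW
    have hwS : (w : V) ∈ c.support := c.mem_verts_toSubgraph.mp w.2
    by_cases hdeg : G.degree (w : V) = 2
    · refine ⟨↑w, Or.inr ⟨w, ⟨hwW, hdeg⟩, rfl⟩, fun z _ => ?_⟩
      rw [SimpleGraph.dist_self]
      omega
    · obtain ⟨ℓ, hℓdeg, hℓ⟩ := hsub ↑w hwS hdeg
      refine ⟨ℓ, Or.inl hℓdeg, fun z hcond => ?_⟩
      rcases hcond with h | rfl
      · exact hℓ z h
      · rw [SimpleGraph.dist_self]
        omega
  -- two distinct elements of W
  obtain ⟨x0, y0, hx0W, hy0W, hx0y0⟩ :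
      ∃ x0 y0 : ↑c.toSubgraph.verts, x0 ∈ W ∧ y0 ∈ W ∧ (x0 : V) ≠ (y0 : V) := by
    have hv₀S : v₀ ∈ c.support := c.start_mem_support
    obtain ⟨n1, n2, hn12, hadj1, hadj2, he1, he2, hcl⟩ := cyc_two_nbrs hc hv₀S
    have hn1S : n1 ∈ c.support := mem_support_of_both' he1 (Sym2.mem_mk_right v₀ n1)
    have hne : (⟨v₀, c.start_mem_verts_toSubgraph⟩ : ↑c.toSubgraph.verts) ≠
        ⟨n1, c.mem_verts_toSubgraph.mpr hn1S⟩ := by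
      intro h
      exact (G.ne_of_adj hadj1) (congrArg Subtype.val h)
    obtain ⟨x0, hx0W, y0, hy0W, hres⟩ := hW _ _ hne
    refine ⟨x0, y0, hx0W, hy0W, fun h => hres ?_⟩
    have : x0 = y0 := Subtype.ext h
    subst this
    rfl
  -- auxiliary: resolve when u is off the cycle
  have aux : ∀ u v : V, u ≠ v → u ∉ c.support →
      ∃ x ∈ T, ∃ y ∈ T, doublyResolves G x y u v := by
    intro u v huv hu
    have hAS := haS u
    have hdA : 0 < G.dist u (a u) := hG.pos_dist_of_ne (fun h => hu (h ▸ hAS))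
    -- pick w ∈ W with ↑w ≠ a u
    obtain ⟨w, hwW, hwA⟩ : ∃ w, w ∈ W ∧ (w : V) ≠ a u := by
      by_cases h : (x0 : V) = a u
      · exact ⟨y0, hy0W, fun h' => hx0y0 (h.trans h'.symm)⟩
      · exact ⟨x0, hx0W, h⟩
    have hwS : (w : V) ∈ c.support := c.mem_verts_toSubgraph.mp w.2
    obtain ⟨pw, hpwT, hpw⟩ := key w hwW
    have hpwu : G.dist u pw = G.dist u ↑w + G.dist ↑w pw :=
      hpw u (Or.inl (fun h => hwA h.symm))
    have hduw : G.dist u ↑w = G.dist u (a u) + G.dist (a u) ↑w := hap u ↑w hwS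
    have hdvw_le : G.dist v ↑w ≤ G.dist v (a u) + G.dist (a u) ↑w := hG.dist_triangle
    have hdvpw_le : G.dist v pw ≤ G.dist v ↑w + G.dist ↑w pw := hG.dist_triangle
    by_cases hnb : G.dist v (a u) = G.dist v u + G.dist u (a u)
    · -- v is behind u
      have hbh := behind hG hc huniq hu hAS hnb
      have hvu_pos : 0 < G.dist v u := hG.pos_dist_of_ne (Ne.symm huv)
      have hvS : v ∉ c.support := by
        intro hv
        have := hbh v hv
        rw [SimpleGraph.dist_self] at this
        have := hG.pos_dist_of_ne huv
        omega
      have havA : a v = a u := by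
        refine proj_unique hG (haS v) hAS (hap v) (fun x hx => ?_)
        have h1 := hbh x hx
        have h2 := hap u x hx
        omega
      have hpwv : G.dist v pw = G.dist v ↑w + G.dist ↑w pw :=
        hpw v (Or.inl (fun h => hwA (havA ▸ h.symm)))
      have hvw : G.dist v ↑w = G.dist v u + G.dist u ↑w := hbh ↑w hwS
      -- second witness : escape from v
      have hprojv : ∀ x ∈ c.support, G.dist v x = G.dist v (a u) + G.dist (a u) x := by
        intro x hx
        rw [← havA]
        exact hap v x hx
      have hnb2 : G.dist u (a u) ≠ G.dist u v + G.dist v (a u) := by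
        have := hG.pos_dist_of_ne huv
        omega
      obtain ⟨ℓ, hℓdeg, hℓ⟩ := esc hG hc huniq u hvS hAS hprojv hnb2
      refine ⟨pw, hpwT, ℓ, Or.inl hℓdeg, ?_⟩
      intro hcon
      have e1 : G.dist u v = G.dist v u := @dist_comm _ _ u v
      omega
    · -- escape from u
      obtain ⟨ℓ, hℓdeg, hℓ⟩ := esc hG hc huniq v hu hAS (hap u) hnb
      refine ⟨ℓ, Or.inl hℓdeg, pw, hpwT, ?_⟩
      intro hcon
      have hvA_le : G.dist v (a u) ≤ G.dist v u + G.dist u (a u) := hG.dist_triangle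
      omega
  -- main case split
  intro u v huv
  by_cases hu : u ∈ c.support
  · by_cases hv : v ∈ c.support
    · -- both on the cycle
      have hne : (⟨u, c.mem_verts_toSubgraph.mpr hu⟩ : ↑c.toSubgraph.verts) ≠
          ⟨v, c.mem_verts_toSubgraph.mpr hv⟩ := fun h => huv (congrArg Subtype.val h)
      obtain ⟨x, hxW, y, hyW, hres⟩ := hW _ _ hne
      obtain ⟨px, hpxT, hpx⟩ := key x hxW
      obtain ⟨py, hpyT, hpy⟩ := key y hyW
      have hxS : (x : V) ∈ c.support := c.mem_verts_toSubgraph.mp x.2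
      have hyS : (y : V) ∈ c.support := c.mem_verts_toSubgraph.mp y.2
      have hcond : ∀ z, z ∈ c.support → ∀ t : ↑c.toSubgraph.verts,
          (a z ≠ ↑t ∨ z = ↑t) := by
        intro z hz t
        by_cases h : z = ↑t
        · exact Or.inr h
        · exact Or.inl (condS z hz ↑t h)
      have e1 := hpx u (hcond u hu x)
      have e2 := hpx v (hcond v hv x)
      have e3 := hpy u (hcond u hu y)
      have e4 := hpy v (hcond v hv y)
      have i1 := iso hG hc huniq ⟨u, c.mem_verts_toSubgraph.mpr hu⟩ x
      have i2 := iso hG hc huniq ⟨v, c.mem_verts_toSubgraph.mpr hv⟩ x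
      have i3 := iso hG hc huniq ⟨u, c.mem_verts_toSubgraph.mpr hu⟩ y
      have i4 := iso hG hc huniq ⟨v, c.mem_verts_toSubgraph.mpr hv⟩ y
      refine ⟨px, hpxT, py, hpyT, ?_⟩
      intro hcon
      apply hres
      rw [i1, i2, i3, i4]
      push_cast
      omega
    · -- v off the cycle : use symmetric aux
      obtain ⟨x, hxT, y, hyT, hres⟩ := aux v u (Ne.symm huv) hv
      refine ⟨x, hxT, y, hyT, fun hcon => hres ?_⟩
      omega
  · exact aux u v huv hu
end
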